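/- Let f be a positive symplectic twist map of 𝕋^d×ℝ^d and let F be a lift of f. Then for every (m,n) ∈ ℤ^d×ℕ*, there is at most one Lipschitz Lagrangian (m,n)-periodic graph of F. -/

import Mathlib

open Function Set Filter Topology MeasureTheory

noncomputable section

/-- `ℝ^d` with the Euclidean structure. -/
abbrev Ed (d : ℕ) := EuclideanSpace ℝ (Fin d)
/-- `ℂ^d`. -/
abbrev Cd (d : ℕ) := EuclideanSpace ℂ (Fin d)

variable {d : ℕ}

/-- The real vector associated with an integer vector `m ∈ ℤ^d`. -/
def intVec (d : ℕ) (m : Fin d → ℤ) : Ed d := WithLp.toLp 2 (fun i => (m i : ℝ))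

/-- The complex vector associated with an integer vector `m ∈ ℤ^d`. -/
def intVecC (d : ℕ) (m : Fin d → ℤ) : Cd d := WithLp.toLp 2 (fun i => (m i : ℂ))

/-- The canonical embedding `ℝ^d → ℂ^d`. -/
def complexify (q : Ed d) : Cd d := WithLp.toLp 2 (fun i => (q i : ℂ))

/-- The standard pairing `⟨p, v⟩ = ∑ i, p i * v i` on `ℝ^d`. -/
def pairing (p v : Ed d) : ℝ := ∑ i, p i * v i

/-- The standard bilinear pairing on `ℂ^d`. -/
def pairingC (p v : Cd d) : ℂ := ∑ i, p i * v i

/-- `g` is a `C¹` diffeomorphism. -/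
def IsC1Diffeo {X Y : Type*} [NormedAddCommGroup X] [NormedSpace ℝ X]
    [NormedAddCommGroup Y] [NormedSpace ℝ Y] (g : X → Y) : Prop :=
  ContDiff ℝ 1 g ∧ ∃ ginv : Y → X, ContDiff ℝ 1 ginv ∧
    Function.LeftInverse ginv g ∧ Function.RightInverse ginv g

/-- `g` is a holomorphic diffeomorphism. -/
def IsHolDiffeo {X Y : Type*} [NormedAddCommGroup X] [NormedSpace ℂ X]
    [NormedAddCommGroup Y] [NormedSpace ℂ Y] (g : X → Y) : Prop :=
  Differentiable ℂ g ∧ ∃ ginv : Y → X, Differentiable ℂ ginv ∧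
    Function.LeftInverse ginv g ∧ Function.RightInverse ginv g

/-- `F(q+m, p) = F(q, p) + (m, 0)` for all `m ∈ ℤ^d`: `F` is the lift of a map of
`𝕋^d × ℝ^d`. -/
def IsZdLift (F : Ed d × Ed d → Ed d × Ed d) : Prop :=
  ∀ (m : Fin d → ℤ) (q p : Ed d),
    F (q + intVec d m, p) = ((F (q, p)).1 + intVec d m, (F (q, p)).2)

/-- `S` is a generating function for the lift `F`, i.e. `S(q+m, Q+m) = S(q, Q)` and
`P dQ - p dq = dS(q, Q)`; the latter means `∂₁S(q, Q(q,p)) = -p` and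
`∂₂S(q, Q(q,p)) = P(q,p)`. -/
structure IsGenFun (F : Ed d × Ed d → Ed d × Ed d) (S : Ed d × Ed d → ℝ) : Prop where
  periodic : ∀ (m : Fin d → ℤ) (q Q : Ed d), S (q + intVec d m, Q + intVec d m) = S (q, Q)
  dq : ∀ q p v : Ed d, fderiv ℝ (fun q' => S (q', (F (q, p)).1)) q v = -(pairing p v)
  dQ : ∀ q p v : Ed d, fderiv ℝ (fun Q' => S (q, Q')) (F (q, p)).1 v = pairing (F (q, p)).2 v

/-- `F : ℝ^d × ℝ^d → ℝ^d × ℝ^d` is a lift of a symplectic twist map of `𝕋^d × ℝ^d`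
with generating function `S`. -/
structure IsSymplecticTwistLift (F : Ed d × Ed d → Ed d × Ed d)
    (S : Ed d × Ed d → ℝ) : Prop where
  diffeo : IsC1Diffeo F
  lift : IsZdLift F
  twist : IsC1Diffeo (fun x : Ed d × Ed d => (x.1, (F x).1))
  genfun : IsGenFun F S

/-- The mixed second derivative `∂²_{qQ} S (q,Q) (v, v)`. -/
def mixedS (S : Ed d × Ed d → ℝ) (q Q v : Ed d) : ℝ :=
  fderiv ℝ (fun Q' => fderiv ℝ (fun q' => S (q', Q')) q v) Q v

/-- The symplectic twist map with `C²` generating function `S` is positive. -/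
def PositiveGenFun (S : Ed d × Ed d → ℝ) : Prop :=
  ContDiff ℝ 2 S ∧ ∃ α : ℝ, 0 < α ∧ ∀ q Q v : Ed d, mixedS S q Q v ≤ -α * ‖v‖ ^ 2

/-- The symplectic twist map with `C²` generating function `S` is strongly positive. -/
def StronglyPositiveGenFun (S : Ed d × Ed d → ℝ) : Prop :=
  ContDiff ℝ 2 S ∧ ∃ α β : ℝ, 0 < α ∧ 0 < β ∧
    ∀ q Q v : Ed d, -β * ‖v‖ ^ 2 ≤ mixedS S q Q v ∧ mixedS S q Q v ≤ -α * ‖v‖ ^ 2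

/-- The second derivative `∂²_{qq} S (q, Q)` as a continuous bilinear map. -/
def hessqq (S : Ed d × Ed d → ℝ) (q Q : Ed d) : Ed d →L[ℝ] Ed d →L[ℝ] ℝ :=
  fderiv ℝ (fun q' => fderiv ℝ (fun q'' => S (q'', Q)) q') q

/-- The second derivative `∂²_{QQ} S (q, Q)` as a continuous bilinear map. -/
def hessQQ (S : Ed d × Ed d → ℝ) (q Q : Ed d) : Ed d →L[ℝ] Ed d →L[ℝ] ℝ :=
  fderiv ℝ (fun Q' => fderiv ℝ (fun Q'' => S (q, Q'')) Q') Q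

/-- The symplectic twist map with `C²` generating function `S` has bounded rate:
`‖∂²_{qq} S‖_∞ + ‖∂²_{QQ} S‖_∞ < ∞`. -/
def BoundedRateGenFun (S : Ed d × Ed d → ℝ) : Prop :=
  ContDiff ℝ 2 S ∧ ∃ C : ℝ, ∀ q Q : Ed d, ‖hessqq S q Q‖ + ‖hessQQ S q Q‖ ≤ C

/-- `γ : ℝ^d → ℝ^d` is `ℤ^d`-periodic. -/
def ZdPeriodic (γ : Ed d → Ed d) : Prop :=
  ∀ (m : Fin d → ℤ) (q : Ed d), γ (q + intVec d m) = γ q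

/-- A function `G : ℝ^d → ℝ` is `ℤ^d`-periodic, i.e. is a function on `𝕋^d`. -/
def ZdPeriodicFun (G : Ed d → ℝ) : Prop :=
  ∀ (m : Fin d → ℤ) (q : Ed d), G (q + intVec d m) = G q

/-- The graph of `γ` is Lagrangian: `∫₀¹ γ(ν(t))·ν'(t) dt = 0` for every `C¹` loop `ν`. -/
def IsLagrangianGraph (γ : Ed d → Ed d) : Prop :=
  ∀ ν : ℝ → Ed d, ContDiff ℝ 1 ν → (∀ t : ℝ, ν (t + 1) = ν t) →
    ∫ t in (0:ℝ)..1, pairing (γ (ν t)) (deriv ν t) = 0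

/-- The graph of `γ` is an `(m, n)`-periodic graph of `F`: `F^n(q, γ(q)) = (q+m, γ(q))`. -/
def IsPeriodicGraph (F : Ed d × Ed d → Ed d × Ed d) (m : Fin d → ℤ) (n : ℕ)
    (γ : Ed d → Ed d) : Prop :=
  ∀ q : Ed d, F^[n] (q, γ q) = (q + intVec d m, γ q)

/-- `m ∈ ℤ^d` and `n ∈ ℕ` are coprime. -/
def CoprimeVec (m : Fin d → ℤ) (n : ℕ) : Prop :=
  Nat.gcd (Finset.univ.gcd fun i => (m i).natAbs) n = 1

/-- The graph of `γ`, as a subset of `ℝ^d × ℝ^d`. -/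
def graphSet (γ : Ed d → Ed d) : Set (Ed d × Ed d) := {x : Ed d × Ed d | x.2 = γ x.1}

/-- `F` admits a Lipschitz Lagrangian `(m,n)`-periodic graph. -/
def HasLipLagPeriodicGraph (F : Ed d × Ed d → Ed d × Ed d) (m : Fin d → ℤ) (n : ℕ) : Prop :=
  ∃ γ : Ed d → Ed d, (∃ K : NNReal, LipschitzWith K γ) ∧ ZdPeriodic γ ∧
    IsLagrangianGraph γ ∧ IsPeriodicGraph F m n γ

/-- The symplectic twist map lifted by `F` satisfies the analyticity property: there is a
holomorphic diffeomorphism of `ℂ^d × ℂ^d` extending `F`, satisfying the twist condition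
and admitting a holomorphic generating function. -/
def SatisfiesAnalyticityProperty (F : Ed d × Ed d → Ed d × Ed d) : Prop :=
  ∃ Fc : Cd d × Cd d → Cd d × Cd d,
    IsHolDiffeo Fc ∧
    (∀ q p : Ed d, Fc (complexify q, complexify p)
        = (complexify (F (q, p)).1, complexify (F (q, p)).2)) ∧
    IsHolDiffeo (fun x : Cd d × Cd d => (x.1, (Fc x).1)) ∧
    ∃ Sc : Cd d × Cd d → ℂ, Differentiable ℂ Sc ∧
      (∀ (m : Fin d → ℤ) (q Q : Cd d), Sc (q + intVecC d m, Q + intVecC d m) = Sc (q, Q)) ∧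
      (∀ q p v : Cd d, fderiv ℂ (fun q' => Sc (q', (Fc (q, p)).1)) q v = -(pairingC p v)) ∧
      (∀ q p v : Cd d,
        fderiv ℂ (fun Q' => Sc (q, Q')) (Fc (q, p)).1 v = pairingC (Fc (q, p)).2 v)

/-- `G : 𝕋^d → ℝ` admits a holomorphic extension to `ℂ^d`. -/
def HasHolomorphicExtension (G : Ed d → ℝ) : Prop :=
  ∃ Gc : Cd d → ℂ, Differentiable ℂ Gc ∧ ∀ q : Ed d, Gc (complexify q) = (G q : ℂ)

/-- `F` is the lift of a completely integrable map `f(q,p) = (q + ∇ℓ₀(p), p)` where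
`ℓ₀` is `C²` and `∇ℓ₀` is a `C¹` diffeomorphism of `ℝ^d`. -/
def CompletelyIntegrableLift (F : Ed d × Ed d → Ed d × Ed d) : Prop :=
  ∃ (ℓ : Ed d → ℝ) (g : Ed d → Ed d), ContDiff ℝ 2 ℓ ∧
    (∀ p v : Ed d, fderiv ℝ ℓ p v = pairing (g p) v) ∧
    IsC1Diffeo g ∧ ∀ q p : Ed d, F (q, p) = (q + g p, p)

/-- The `ν`-th Fourier coefficient of a `ℤ^d`-periodic function `G : ℝ^d → ℝ`. -/
def fourierCoeffT (G : Ed d → ℝ) (ν : Fin d → ℤ) : ℂ :=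
  ∫ q in {q : Ed d | ∀ i, q i ∈ Set.Icc (0:ℝ) 1},
    (G q : ℂ) * Complex.exp (-(2 * Real.pi * Complex.I) * ∑ i, (ν i : ℂ) * (q i : ℂ))

/-- The sequence `(x_j)_{j ∈ ℤ}` is action-minimizing for the generating function `S`. -/
def IsMinimizingSeq (S : Ed d × Ed d → ℝ) (x : ℤ → Ed d) : Prop :=
  ∀ (k : ℤ) (N : ℕ) (w : ℕ → Ed d), w 0 = x k → w N = x (k + N) →
    ∑ j ∈ Finset.range N, S (x (k + j), x (k + j + 1)) ≤
      ∑ j ∈ Finset.range N, S (w j, w (j + 1))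

/-- `x : ℤ → ℝ^d × ℝ^d` is a full orbit of `F`. -/
def IsFullOrbit (F : Ed d × Ed d → Ed d × Ed d) (x : ℤ → Ed d × Ed d) : Prop :=
  ∀ j : ℤ, x (j + 1) = F (x j)

/-- The orbit of `a` under `F` is action-minimizing (its projection is a minimizing
sequence). -/
def OrbitMinimizing (F : Ed d × Ed d → Ed d × Ed d) (S : Ed d × Ed d → ℝ)
    (a : Ed d × Ed d) : Prop :=
  ∃ x : ℤ → Ed d × Ed d, x 0 = a ∧ IsFullOrbit F x ∧ IsMinimizingSeq S fun j => (x j).1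

/-- The superlinearity condition `S(q,Q)/‖Q-q‖ → ∞` as `‖Q-q‖ → ∞`. -/
def SuperlinearGenFun (S : Ed d × Ed d → ℝ) : Prop :=
  ∀ A : ℝ, ∃ R : ℝ, ∀ q Q : Ed d, R ≤ ‖Q - q‖ → A * ‖Q - q‖ ≤ S (q, Q)

/-- The determinant of `∂_p (π₁ ∘ F^n) (q, p)`. -/
def twistDet (F : Ed d × Ed d → Ed d × Ed d) (n : ℕ) (q p : Ed d) : ℝ :=
  LinearMap.det ((fderiv ℝ (fun p' => (F^[n] (q, p')).1) p : Ed d →L[ℝ] Ed d)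
    : Ed d →ₗ[ℝ] Ed d)

/-- The set `A ⊆ ℝ` is infinite with points accumulating to `0`. -/
def InfiniteAccumulatingAtZero (A : Set ℝ) : Prop :=
  A.Infinite ∧ ∀ δ : ℝ, 0 < δ → ∃ ε ∈ A, ε ≠ 0 ∧ |ε| < δ




open RealInnerProductSpace

section AuxProofs

lemma pairing_eq_inner (p v : Ed d) : pairing p v = ⟪p, v⟫ := by
  rw [PiLp.inner_apply]
  simp [pairing, RCLike.inner_apply, conj_trivial, mul_comm]

lemma pairing_self (v : Ed d) : pairing v v = ‖v‖ ^ 2 := by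
  rw [pairing_eq_inner, real_inner_self_eq_norm_sq]

lemma pairing_eq_of_forall {u u' : Ed d} (h : ∀ v, pairing u v = pairing u' v) : u = u' := by
  have h2 : ∀ v : Ed d, ⟪u - u', v⟫ = 0 := by
    intro v
    have := h v
    rw [pairing_eq_inner, pairing_eq_inner] at this
    rw [inner_sub_left, this, sub_self]
  have := h2 (u - u')
  rw [inner_self_eq_zero] at this
  exact sub_eq_zero.mp this

lemma abs_pairing_le (p v : Ed d) : |pairing p v| ≤ ‖p‖ * ‖v‖ := by
  rw [pairing_eq_inner]; exact abs_real_inner_le_norm p v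

/-- `‖·‖` bound for continuous `ℤ^d`-periodic functions into a normed space. -/
lemma bounded_of_periodic {X : Type*} [NormedAddCommGroup X] (f : Ed d → X)
    (hf : Continuous f) (hper : ∀ (e : Fin d → ℤ) (q : Ed d), f (q + intVec d e) = f q) :
    ∃ C : ℝ, ∀ q, ‖f q‖ ≤ C := by
  classical
  set K : Set (Ed d) := {q : Ed d | ∀ i, q i ∈ Set.Icc (0:ℝ) 1} with hK
  have hKclosed : IsClosed K := by
    have : K = ⋂ i, (fun q : Ed d => q i) ⁻¹' (Set.Icc (0:ℝ) 1) := by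
      ext q; simp [hK, Set.mem_iInter]
    rw [this]
    exact isClosed_iInter fun i => (isClosed_Icc).preimage (PiLp.continuous_apply 2 _ i)
  have hKbdd : Bornology.IsBounded K := by
    have hsub : K ⊆ Metric.closedBall 0 (Real.sqrt d) := by
      intro q hq
      simp only [Metric.mem_closedBall, dist_zero_right]
      have hnorm : ‖q‖ = Real.sqrt (∑ i, ‖q i‖ ^ 2) := by
        rw [EuclideanSpace.norm_eq]
      rw [hnorm]
      apply Real.sqrt_le_sqrt
      calc (∑ i, ‖q i‖ ^ 2) ≤ ∑ _i : Fin d, (1:ℝ) := by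
            apply Finset.sum_le_sum
            intro i _
            have h1 := (hq i).1
            have h2 := (hq i).2
            have habs : |q i| ≤ 1 := abs_le.mpr ⟨by linarith, h2⟩
            calc ‖q i‖ ^ 2 = |q i| ^ 2 := by rw [Real.norm_eq_abs]
              _ ≤ 1 := by nlinarith [abs_nonneg (q i)]
        _ = (d : ℝ) := by simp
    exact (Metric.isBounded_closedBall).subset hsub
  have hKcpt : IsCompact K := Metric.isCompact_of_isClosed_isBounded hKclosed hKbdd
  obtain ⟨C, hC⟩ := hKcpt.exists_bound_of_continuousOn hf.continuousOn
  refine ⟨C, fun q => ?_⟩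
  set e : Fin d → ℤ := fun i => ⌊q i⌋ with he
  have hmem : q - intVec d e ∈ K := by
    intro i
    have hco : (q - intVec d e) i = q i - (⌊q i⌋ : ℝ) := by simp [intVec, he]
    rw [hco]
    constructor
    · linarith [Int.floor_le (q i)]
    · linarith [Int.lt_floor_add_one (q i)]
  have hfq : f q = f (q - intVec d e) := by
    have h5 := hper e (q - intVec d e)
    rw [sub_add_cancel] at h5
    exact h5
  rw [hfq]
  exact hC _ hmem


lemma pairing_smul_right (p : Ed d) (c : ℝ) (v : Ed d) :
    pairing p (c • v) = c * pairing p v := by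
  rw [pairing_eq_inner, pairing_eq_inner]; exact real_inner_smul_right p v c

lemma pairing_continuous : Continuous fun x : Ed d × Ed d => pairing x.1 x.2 := by
  have : (fun x : Ed d × Ed d => pairing x.1 x.2) = fun x : Ed d × Ed d => ⟪x.1, x.2⟫ := by
    funext x; exact pairing_eq_inner _ _
  rw [this]
  exact continuous_inner

namespace SmoothLoop

local notation "θ" => Real.smoothTransition

lemma theta_hasDerivAt (x : ℝ) : HasDerivAt θ (deriv θ x) x :=
  ((Real.smoothTransition.contDiff (n := 1)).differentiable (by norm_num)).differentiableAt.hasDerivAt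

lemma theta_deriv_continuous : Continuous (deriv θ) :=
  (Real.smoothTransition.contDiff (n := (2:ℕ∞))).continuous_deriv (by norm_num)

lemma theta_deriv_of_lt_zero {x : ℝ} (h : x < 0) : deriv θ x = 0 := by
  have hev : θ =ᶠ[𝓝 x] fun _ => (0:ℝ) := by
    filter_upwards [Iio_mem_nhds h] with y hy
    exact Real.smoothTransition.zero_of_nonpos (le_of_lt hy)
  rw [hev.deriv_eq, deriv_const]

lemma theta_deriv_of_one_lt {x : ℝ} (h : 1 < x) : deriv θ x = 0 := by
  have hev : θ =ᶠ[𝓝 x] fun _ => (1:ℝ) := by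
    filter_upwards [Ioi_mem_nhds h] with y hy
    exact Real.smoothTransition.one_of_one_le (le_of_lt hy)
  rw [hev.deriv_eq, deriv_const]

lemma theta_deriv_nonpos {x : ℝ} (h : x ≤ 0) : deriv θ x = 0 := by
  rcases lt_or_eq_of_le h with h' | h'
  · exact theta_deriv_of_lt_zero h'
  · subst h'
    have h1 : Filter.Tendsto (deriv θ) (𝓝[<] (0:ℝ)) (𝓝 (deriv θ 0)) :=
      (theta_deriv_continuous.continuousAt).continuousWithinAt.tendsto
    have h2 : Filter.Tendsto (deriv θ) (𝓝[<] (0:ℝ)) (𝓝 0) := by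
      apply Filter.Tendsto.congr' _ tendsto_const_nhds
      filter_upwards [self_mem_nhdsWithin] with y hy
      exact (theta_deriv_of_lt_zero hy).symm
    exact tendsto_nhds_unique h1 h2

lemma theta_deriv_one_le {x : ℝ} (h : 1 ≤ x) : deriv θ x = 0 := by
  rcases lt_or_eq_of_le h with h' | h'
  · exact theta_deriv_of_one_lt h'
  · subst h'
    have h1 : Filter.Tendsto (deriv θ) (𝓝[>] (1:ℝ)) (𝓝 (deriv θ 1)) :=
      (theta_deriv_continuous.continuousAt).continuousWithinAt.tendsto
    have h2 : Filter.Tendsto (deriv θ) (𝓝[>] (1:ℝ)) (𝓝 0) := by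
      apply Filter.Tendsto.congr' _ tendsto_const_nhds
      filter_upwards [self_mem_nhdsWithin] with y hy
      exact (theta_deriv_of_one_lt hy).symm
    exact tendsto_nhds_unique h1 h2

/-- The raw triangle loop `0 → u → w → 0`, traversed within `[0, 3/8]`. -/
def nuRaw (u w : Ed d) (t : ℝ) : Ed d :=
  θ (8*t) • u + θ (8*t - 1) • (w - u) - θ (8*t - 2) • w

/-- Its derivative. -/
def nuD (u w : Ed d) (t : ℝ) : Ed d :=
  (8 * deriv θ (8*t)) • u + (8 * deriv θ (8*t - 1)) • (w - u)
    - (8 * deriv θ (8*t - 2)) • w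

lemma nuRaw_contDiff (u w : Ed d) : ContDiff ℝ 1 (nuRaw u w) := by
  have h8 : ContDiff ℝ 1 fun t : ℝ => 8*t := (contDiff_const.mul contDiff_id)
  have h1 : ContDiff ℝ 1 fun t : ℝ => 8*t - 1 := h8.sub contDiff_const
  have h2 : ContDiff ℝ 1 fun t : ℝ => 8*t - 2 := h8.sub contDiff_const
  have hth : ContDiff ℝ 1 θ := Real.smoothTransition.contDiff
  exact (((hth.comp h8).smul contDiff_const).add
    ((hth.comp h1).smul contDiff_const)).sub ((hth.comp h2).smul contDiff_const)

lemma nuRaw_hasDerivAt (u w : Ed d) (t : ℝ) : HasDerivAt (nuRaw u w) (nuD u w t) t := by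
  have h8 : HasDerivAt (fun t : ℝ => 8*t) 8 t := by
    simpa using (hasDerivAt_id t).const_mul (8:ℝ)
  have h81 : HasDerivAt (fun t : ℝ => 8*t - 1) 8 t := h8.sub_const 1
  have h82 : HasDerivAt (fun t : ℝ => 8*t - 2) 8 t := h8.sub_const 2
  have k0 : HasDerivAt (fun t : ℝ => θ (8*t)) (deriv θ (8*t) * 8) t :=
    (theta_hasDerivAt (8*t)).comp t h8
  have k1 : HasDerivAt (fun t : ℝ => θ (8*t - 1)) (deriv θ (8*t - 1) * 8) t :=
    by have := (theta_hasDerivAt (8*t - 1)).comp t h81; exact this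
  have k2 : HasDerivAt (fun t : ℝ => θ (8*t - 2)) (deriv θ (8*t - 2) * 8) t :=
    by have := (theta_hasDerivAt (8*t - 2)).comp t h82; exact this
  have := ((k0.smul_const u).add (k1.smul_const (w - u))).sub (k2.smul_const w)
  refine this.congr_deriv ?_
  unfold nuD
  rw [mul_comm (8:ℝ) (deriv θ (8*t)), mul_comm (8:ℝ) (deriv θ (8*t - 1)),
    mul_comm (8:ℝ) (deriv θ (8*t - 2))]

lemma nuRaw_eq_zero_of_ge {u w : Ed d} {t : ℝ} (h : 3/8 ≤ t) : nuRaw u w t = 0 := by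
  unfold nuRaw
  rw [Real.smoothTransition.one_of_one_le (by linarith),
    Real.smoothTransition.one_of_one_le (by linarith),
    Real.smoothTransition.one_of_one_le (by linarith)]
  simp

lemma nuRaw_eq_zero_of_le {u w : Ed d} {t : ℝ} (h : t ≤ 0) : nuRaw u w t = 0 := by
  unfold nuRaw
  rw [Real.smoothTransition.zero_of_nonpos (by linarith),
    Real.smoothTransition.zero_of_nonpos (by linarith),
    Real.smoothTransition.zero_of_nonpos (by linarith)]
  simp

/-- The periodized loop. -/
def nu (u w : Ed d) (t : ℝ) : Ed d := nuRaw u w (Int.fract t)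

lemma nu_periodic (u w : Ed d) (t : ℝ) : nu u w (t + 1) = nu u w t := by
  unfold nu
  congr 1
  have : (t + 1) = t + ((1:ℤ):ℝ) := by norm_num
  rw [this, Int.fract_add_intCast]

/-- local representation of `nu` near any point. -/
lemma nu_eq_near (u w : Ed d) (t₀ : ℝ) :
    ∃ k : ℤ, t₀ ∈ Ioo ((k:ℝ) - 5/8) (k + 1/2) ∧
      ∀ t ∈ Ioo ((k:ℝ) - 5/8) (k + 1/2), nu u w t = nuRaw u w (t - k) := by
  refine ⟨⌊t₀ + 1/2⌋, ?_, ?_⟩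
  · have h1 := Int.floor_le (t₀ + 1/2)
    have h2 := Int.lt_floor_add_one (t₀ + 1/2)
    constructor <;> [linarith; linarith]
  · intro t ht
    rcases lt_or_ge t (⌊t₀ + 1/2⌋ : ℝ) with h | h
    · -- t in lower part: both sides are 0
      have hf : nuRaw u w (t - ⌊t₀ + 1/2⌋) = 0 := nuRaw_eq_zero_of_le (by linarith)
      have hfr : Int.fract t ≥ 3/8 ∨ Int.fract t ≤ 0 := by
        left
        have hfloor : (⌊t⌋:ℝ) = (⌊t₀ + 1/2⌋ : ℝ) - 1 := by
          have : ⌊t⌋ = ⌊t₀ + 1/2⌋ - 1 := by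
            apply Int.floor_eq_iff.mpr
            constructor
            · push_cast; linarith [ht.1]
            · push_cast; linarith
          rw [this]; push_cast; ring
        have : Int.fract t = t - ((⌊t₀ + 1/2⌋ : ℝ) - 1) := by
          rw [← Int.self_sub_floor, hfloor]
        rw [this]; linarith [ht.1]
      rw [hf]
      unfold nu
      rcases hfr with h' | h'
      · exact nuRaw_eq_zero_of_ge h'
      · exact nuRaw_eq_zero_of_le h'
    · have : Int.fract t = t - ⌊t₀ + 1/2⌋ := by
        have hfloor : ⌊t⌋ = ⌊t₀ + 1/2⌋ := by
          apply Int.floor_eq_iff.mpr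
          constructor
          · exact_mod_cast h
          · push_cast; linarith [ht.2]
        rw [← Int.self_sub_floor, hfloor]
      unfold nu
      rw [this]

lemma nu_contDiff (u w : Ed d) : ContDiff ℝ 1 (nu u w) := by
  rw [contDiff_iff_contDiffAt]
  intro t₀
  obtain ⟨k, hmem, heq⟩ := nu_eq_near u w t₀
  have hsm : ContDiff ℝ 1 fun t : ℝ => nuRaw u w (t - k) :=
    (nuRaw_contDiff u w).comp (contDiff_id.sub contDiff_const)
  apply hsm.contDiffAt.congr_of_eventuallyEq
  filter_upwards [Ioo_mem_nhds hmem.1 hmem.2] with t ht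
  exact heq t ht

lemma nuD_eq_zero_of_le {u w : Ed d} {t : ℝ} (h : t ≤ 0) : nuD u w t = 0 := by
  unfold nuD
  rw [theta_deriv_nonpos (by linarith), theta_deriv_nonpos (by linarith),
    theta_deriv_nonpos (by linarith)]
  simp

lemma nuD_eq_zero_of_ge {u w : Ed d} {t : ℝ} (h : 3/8 ≤ t) : nuD u w t = 0 := by
  unfold nuD
  rw [theta_deriv_one_le (by linarith), theta_deriv_one_le (by linarith),
    theta_deriv_one_le (by linarith)]
  simp

lemma fract_of_neg {s : ℝ} (h1 : -1 ≤ s) (h2 : s < 0) : Int.fract s = s + 1 := by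
  have hfloor : ⌊s⌋ = -1 := by
    apply Int.floor_eq_iff.mpr
    constructor <;> [push_cast; push_cast] <;> linarith
  rw [← Int.self_sub_floor, hfloor]
  push_cast; ring

lemma nu_eq_nuRaw_lower (u w : Ed d) {s : ℝ} (hs : s ∈ Ioo (-(5:ℝ)/8) (1/2)) :
    nu u w s = nuRaw u w s := by
  rcases lt_or_ge s 0 with h | h
  · have : Int.fract s = s + 1 := fract_of_neg (by linarith [hs.1]) h
    unfold nu
    rw [this, nuRaw_eq_zero_of_ge (by linarith [hs.1]), nuRaw_eq_zero_of_le h.le]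
  · unfold nu
    rw [Int.fract_eq_self.mpr ⟨h, by linarith [hs.2]⟩]

lemma nu_eq_nuRaw_shift (u w : Ed d) {s : ℝ} (hs : s ∈ Ioo ((3:ℝ)/8) (3/2)) :
    nu u w s = nuRaw u w (s - 1) := by
  rcases lt_or_ge s 1 with h | h
  · unfold nu
    rw [Int.fract_eq_self.mpr ⟨by linarith [hs.1], h⟩,
      nuRaw_eq_zero_of_ge (le_of_lt hs.1), nuRaw_eq_zero_of_le (by linarith)]
  · unfold nu
    have : Int.fract s = s - 1 := by
      have hfloor : ⌊s⌋ = 1 := by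
        apply Int.floor_eq_iff.mpr
        constructor <;> push_cast <;> linarith [hs.2]
      rw [← Int.self_sub_floor, hfloor]
      push_cast; ring
    rw [this]

lemma nu_hasDerivAt_on_unit (u w : Ed d) {t : ℝ} (ht : t ∈ Icc (0:ℝ) 1) :
    HasDerivAt (nu u w) (nuD u w t) t := by
  rcases lt_or_ge t (1/2 : ℝ) with h | h
  · apply (nuRaw_hasDerivAt u w t).congr_of_eventuallyEq
    filter_upwards [Ioo_mem_nhds (show -(5:ℝ)/8 < t by linarith [ht.1]) h] with s hs
    exact nu_eq_nuRaw_lower u w hs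
  · have hshift : HasDerivAt (fun s : ℝ => nuRaw u w (s - 1)) (nuD u w (t - 1)) t := by
      have hinner : HasDerivAt (fun s : ℝ => s - 1) 1 t := (hasDerivAt_id t).sub_const 1
      have := (nuRaw_hasDerivAt u w (t - 1)).scomp t hinner
      rw [one_smul] at this; exact this
    have h0 : nuD u w (t - 1) = nuD u w t := by
      rw [nuD_eq_zero_of_le (by linarith [ht.2]), nuD_eq_zero_of_ge (by linarith)]
    rw [← h0]
    apply hshift.congr_of_eventuallyEq
    filter_upwards [Ioo_mem_nhds (show (3:ℝ)/8 < t by linarith)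
      (show t < (3:ℝ)/2 by linarith [ht.2])] with s hs
    exact nu_eq_nuRaw_shift u w hs

lemma nu_eq_nuRaw_on_unit (u w : Ed d) {s : ℝ} (hs : s ∈ Icc (0:ℝ) 1) :
    nu u w s = nuRaw u w s := by
  rcases lt_or_ge s 1 with h | h
  · unfold nu; rw [Int.fract_eq_self.mpr ⟨hs.1, h⟩]
  · have h1 : s = 1 := le_antisymm hs.2 h
    subst h1
    unfold nu
    norm_num
    rw [nuRaw_eq_zero_of_le le_rfl, nuRaw_eq_zero_of_ge (by norm_num)]

/-- Segment integral of the 1-form `γ·dq` from `a` to `b`. -/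
def segI (γ : Ed d → Ed d) (a b : Ed d) : ℝ :=
  ∫ s in (0:ℝ)..1, pairing (γ (a + s • (b - a))) (b - a)

lemma nuD_continuous (u w : Ed d) : Continuous (nuD u w) := by
  unfold nuD
  have h8 : Continuous fun t : ℝ => 8*t := continuous_const.mul continuous_id
  have h1 : Continuous fun t : ℝ => 8*t - 1 := h8.sub continuous_const
  have h2 : Continuous fun t : ℝ => 8*t - 2 := h8.sub continuous_const
  exact (((continuous_const.mul (theta_deriv_continuous.comp h8)).smul continuous_const).add
    ((continuous_const.mul (theta_deriv_continuous.comp h1)).smul continuous_const)).sub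
    ((continuous_const.mul (theta_deriv_continuous.comp h2)).smul continuous_const)

lemma nuRaw_continuous (u w : Ed d) : Continuous (nuRaw u w) :=
  (nuRaw_contDiff u w).continuous

lemma triangle_identity (γ : Ed d → Ed d) (hγ : Continuous γ)
    (hLag : ∀ ν : ℝ → Ed d, ContDiff ℝ 1 ν → (∀ t, ν (t+1) = ν t) →
      ∫ t in (0:ℝ)..1, pairing (γ (ν t)) (deriv ν t) = 0)
    (u w : Ed d) : segI γ 0 u + segI γ u w = segI γ 0 w := by
  have h0 := hLag (nu u w) (nu_contDiff u w) (nu_periodic u w)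
  set F : ℝ → ℝ := fun t => pairing (γ (nuRaw u w t)) (nuD u w t) with hF
  have hFcont : Continuous F :=
    pairing_continuous.comp ((hγ.comp (nuRaw_continuous u w)).prodMk (nuD_continuous u w))
  have hcongr : ∫ t in (0:ℝ)..1, pairing (γ (nu u w t)) (deriv (nu u w) t)
      = ∫ t in (0:ℝ)..1, F t := by
    apply intervalIntegral.integral_congr
    intro t ht
    rw [Set.uIcc_of_le (by norm_num : (0:ℝ) ≤ 1)] at ht
    show pairing (γ (nu u w t)) (deriv (nu u w) t) = pairing (γ (nuRaw u w t)) (nuD u w t)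
    rw [(nu_hasDerivAt_on_unit u w ht).deriv, nu_eq_nuRaw_on_unit u w ht]
  rw [hcongr] at h0
  -- split the integral
  have hint : ∀ a b : ℝ, IntervalIntegrable F MeasureTheory.volume a b :=
    fun a b => hFcont.intervalIntegrable a b
  have hsplit1 : (∫ t in (0:ℝ)..(1/8), F t) + (∫ t in (1/8:ℝ)..1, F t)
      = ∫ t in (0:ℝ)..1, F t := intervalIntegral.integral_add_adjacent_intervals (hint _ _) (hint _ _)
  have hsplit2 : (∫ t in (1/8:ℝ)..(1/4), F t) + (∫ t in (1/4:ℝ)..1, F t)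
      = ∫ t in (1/8:ℝ)..1, F t := intervalIntegral.integral_add_adjacent_intervals (hint _ _) (hint _ _)
  have hsplit3 : (∫ t in (1/4:ℝ)..(3/8), F t) + (∫ t in (3/8:ℝ)..1, F t)
      = ∫ t in (1/4:ℝ)..1, F t := intervalIntegral.integral_add_adjacent_intervals (hint _ _) (hint _ _)
  -- piece 4 : zero
  have hp4 : ∫ t in (3/8:ℝ)..1, F t = 0 := by
    have : ∀ t ∈ Set.uIcc (3/8:ℝ) 1, F t = 0 := by
      intro t ht
      rw [Set.uIcc_of_le (by norm_num : (3/8:ℝ) ≤ 1)] at ht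
      show pairing (γ (nuRaw u w t)) (nuD u w t) = 0
      rw [nuD_eq_zero_of_ge ht.1, pairing_eq_inner, inner_zero_right]
    rw [intervalIntegral.integral_congr this]
    simp
  -- piece 1
  have hp1 : ∫ t in (0:ℝ)..(1/8), F t = segI γ 0 u := by
    have heq : ∀ t ∈ Set.uIcc (0:ℝ) (1/8),
        F t = (8 * deriv θ (8*t)) • ((fun s => pairing (γ (s • u)) u) ∘ (fun t => θ (8*t))) t := by
      intro t ht
      rw [Set.uIcc_of_le (by norm_num : (0:ℝ) ≤ 1/8)] at ht
      have e1 : θ (8*t - 1) = 0 := Real.smoothTransition.zero_of_nonpos (by linarith [ht.2])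
      have e2 : θ (8*t - 2) = 0 := Real.smoothTransition.zero_of_nonpos (by linarith [ht.2])
      have d1 : deriv θ (8*t - 1) = 0 := theta_deriv_nonpos (by linarith [ht.2])
      have d2 : deriv θ (8*t - 2) = 0 := theta_deriv_nonpos (by linarith [ht.2])
      show pairing (γ (nuRaw u w t)) (nuD u w t) = _
      unfold nuRaw nuD
      rw [e1, e2, d1, d2]
      simp only [zero_smul, add_zero, sub_zero, mul_zero, Function.comp]
      rw [pairing_smul_right]
      rw [smul_eq_mul]
    rw [intervalIntegral.integral_congr heq]
    have hsub : (∫ t in (0:ℝ)..(1/8),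
          (8 * deriv θ (8*t)) • ((fun s => pairing (γ (s • u)) u) ∘ fun t => θ (8*t)) t)
        = ∫ s in ((fun t : ℝ => θ (8*t)) 0)..((fun t : ℝ => θ (8*t)) (1/8)),
            pairing (γ (s • u)) u := by
      apply intervalIntegral.integral_comp_smul_deriv
      · intro t _
        have h8 : HasDerivAt (fun t : ℝ => 8*t) 8 t := by
          simpa using (hasDerivAt_id t).const_mul (8:ℝ)
        have h := (theta_hasDerivAt (8*t)).comp t h8
        rw [mul_comm] at h
        exact h
      · exact (continuous_const.mul (theta_deriv_continuous.comp
          ((continuous_const.mul continuous_id) : Continuous fun t : ℝ => 8*t))).continuousOn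
      · exact pairing_continuous.comp ((hγ.comp (continuous_id.smul continuous_const)).prodMk
          continuous_const)
    rw [hsub]
    have hb0 : (fun t : ℝ => θ (8*t)) 0 = 0 := by
      show θ (8 * (0:ℝ)) = 0
      rw [mul_zero]; exact Real.smoothTransition.zero
    have hb1 : (fun t : ℝ => θ (8*t)) (1/8) = 1 := by
      show θ (8 * (1/8:ℝ)) = 1
      norm_num
    rw [hb0, hb1]
    unfold segI
    apply intervalIntegral.integral_congr
    intro s _
    simp only [zero_add, sub_zero]
  -- piece 2
  have hp2 : ∫ t in (1/8:ℝ)..(1/4), F t = segI γ u w := by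
    have heq : ∀ t ∈ Set.uIcc (1/8:ℝ) (1/4),
        F t = (8 * deriv θ (8*t - 1)) •
          ((fun s => pairing (γ (u + s • (w - u))) (w - u)) ∘ fun t => θ (8*t - 1)) t := by
      intro t ht
      rw [Set.uIcc_of_le (by norm_num : (1/8:ℝ) ≤ 1/4)] at ht
      have e0 : θ (8*t) = 1 := Real.smoothTransition.one_of_one_le (by linarith [ht.1])
      have e2 : θ (8*t - 2) = 0 := Real.smoothTransition.zero_of_nonpos (by linarith [ht.2])
      have d0 : deriv θ (8*t) = 0 := theta_deriv_one_le (by linarith [ht.1])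
      have d2 : deriv θ (8*t - 2) = 0 := theta_deriv_nonpos (by linarith [ht.2])
      show pairing (γ (nuRaw u w t)) (nuD u w t) = _
      unfold nuRaw nuD
      rw [e0, e2, d0, d2]
      simp only [one_smul, zero_smul, mul_zero, zero_add, add_zero, sub_zero, Function.comp]
      rw [pairing_smul_right, smul_eq_mul]
    rw [intervalIntegral.integral_congr heq]
    have hsub : (∫ t in (1/8:ℝ)..(1/4),
          (8 * deriv θ (8*t - 1)) •
            ((fun s => pairing (γ (u + s • (w - u))) (w - u)) ∘ fun t => θ (8*t - 1)) t)
        = ∫ s in ((fun t : ℝ => θ (8*t - 1)) (1/8))..((fun t : ℝ => θ (8*t - 1)) (1/4)),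
            pairing (γ (u + s • (w - u))) (w - u) := by
      apply intervalIntegral.integral_comp_smul_deriv
      · intro t _
        have h8 : HasDerivAt (fun t : ℝ => 8*t - 1) 8 t := by
          simpa using ((hasDerivAt_id t).const_mul (8:ℝ)).sub_const 1
        have h := (theta_hasDerivAt (8*t - 1)).comp t h8
        rw [mul_comm] at h
        exact h
      · exact (continuous_const.mul (theta_deriv_continuous.comp
          (((continuous_const.mul continuous_id).sub continuous_const) : Continuous fun t : ℝ => 8*t - 1))).continuousOn
      · exact pairing_continuous.comp ((hγ.comp
          (continuous_const.add (continuous_id.smul continuous_const))).prodMk continuous_const)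
    rw [hsub]
    have hb0 : (fun t : ℝ => θ (8*t - 1)) (1/8) = 0 := by
      show θ (8 * (1/8:ℝ) - 1) = 0
      norm_num
    have hb1 : (fun t : ℝ => θ (8*t - 1)) (1/4) = 1 := by
      show θ (8 * (1/4:ℝ) - 1) = 1
      norm_num
    rw [hb0, hb1]
    rfl
  -- piece 3
  have hp3 : ∫ t in (1/4:ℝ)..(3/8), F t = -segI γ 0 w := by
    have heq : ∀ t ∈ Set.uIcc (1/4:ℝ) (3/8),
        F t = (8 * deriv θ (8*t - 2)) •
          ((fun s => pairing (γ (w - s • w)) (-w)) ∘ fun t => θ (8*t - 2)) t := by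
      intro t ht
      rw [Set.uIcc_of_le (by norm_num : (1/4:ℝ) ≤ 3/8)] at ht
      have e0 : θ (8*t) = 1 := Real.smoothTransition.one_of_one_le (by linarith [ht.1])
      have e1 : θ (8*t - 1) = 1 := Real.smoothTransition.one_of_one_le (by linarith [ht.1])
      have d0 : deriv θ (8*t) = 0 := theta_deriv_one_le (by linarith [ht.1])
      have d1 : deriv θ (8*t - 1) = 0 := theta_deriv_one_le (by linarith [ht.1])
      show pairing (γ (nuRaw u w t)) (nuD u w t) = _
      unfold nuRaw nuD
      rw [e0, e1, d0, d1]
      simp only [one_smul, zero_smul, mul_zero, zero_add, add_zero, sub_zero, zero_sub,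
        Function.comp, add_sub_cancel]
      rw [← smul_neg, pairing_smul_right, smul_eq_mul]
    rw [intervalIntegral.integral_congr heq]
    have hsub : (∫ t in (1/4:ℝ)..(3/8),
          (8 * deriv θ (8*t - 2)) •
            ((fun s => pairing (γ (w - s • w)) (-w)) ∘ fun t => θ (8*t - 2)) t)
        = ∫ s in ((fun t : ℝ => θ (8*t - 2)) (1/4))..((fun t : ℝ => θ (8*t - 2)) (3/8)),
            pairing (γ (w - s • w)) (-w) := by
      apply intervalIntegral.integral_comp_smul_deriv
      · intro t _
        have h8 : HasDerivAt (fun t : ℝ => 8*t - 2) 8 t := by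
          simpa using ((hasDerivAt_id t).const_mul (8:ℝ)).sub_const 2
        have h := (theta_hasDerivAt (8*t - 2)).comp t h8
        rw [mul_comm] at h
        exact h
      · exact (continuous_const.mul (theta_deriv_continuous.comp
          (((continuous_const.mul continuous_id).sub continuous_const) : Continuous fun t : ℝ => 8*t - 2))).continuousOn
      · exact pairing_continuous.comp ((hγ.comp
          (continuous_const.sub (continuous_id.smul continuous_const))).prodMk continuous_const)
    rw [hsub]
    have hb0 : (fun t : ℝ => θ (8*t - 2)) (1/4) = 0 := by
      show θ (8 * (1/4:ℝ) - 2) = 0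
      norm_num
    have hb1 : (fun t : ℝ => θ (8*t - 2)) (3/8) = 1 := by
      show θ (8 * (3/8:ℝ) - 2) = 1
      norm_num
    rw [hb0, hb1]
    have hrw : ∀ s : ℝ, pairing (γ (w - s • w)) (-w) = -pairing (γ ((1 - s) • w)) w := by
      intro s
      have h1 : (1 - s) • w = w - s • w := by rw [sub_smul, one_smul]
      rw [h1, pairing_eq_inner, pairing_eq_inner, inner_neg_right]
    have : (∫ s in (0:ℝ)..1, pairing (γ (w - s • w)) (-w))
        = ∫ s in (0:ℝ)..1, -pairing (γ ((1 - s) • w)) w := by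
      apply intervalIntegral.integral_congr
      intro s _
      exact hrw s
    rw [this, intervalIntegral.integral_neg, neg_inj]
    have hcs := intervalIntegral.integral_comp_sub_left
      (fun s : ℝ => pairing (γ (s • w)) w) 1 (a := 0) (b := 1)
    norm_num at hcs
    rw [hcs]
    unfold segI
    apply intervalIntegral.integral_congr
    intro s _
    simp only [zero_add, sub_zero]
  linarith [h0, hsplit1, hsplit2, hsplit3, hp1, hp2, hp3, hp4]

/-- The potential of a Lagrangian field: `pot γ q = ∫_0^q γ·dq` along the segment. -/
def pot (γ : Ed d → Ed d) (q : Ed d) : ℝ := segI γ 0 q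

lemma pot_hasFDerivAt (γ : Ed d → Ed d) (hγ : Continuous γ)
    (hLag : ∀ ν : ℝ → Ed d, ContDiff ℝ 1 ν → (∀ t, ν (t+1) = ν t) →
      ∫ t in (0:ℝ)..1, pairing (γ (ν t)) (deriv ν t) = 0) (q : Ed d) :
    HasFDerivAt (pot γ) (innerSL ℝ (γ q)) q := by
  rw [hasFDerivAt_iff_isLittleO_nhds_zero]
  rw [Asymptotics.isLittleO_iff]
  intro c hc
  obtain ⟨δ, hδ, hcont⟩ := Metric.continuousAt_iff.mp hγ.continuousAt c hc
  filter_upwards [Metric.ball_mem_nhds (0 : Ed d) hδ] with h hh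
  have hdiff : pot γ (q + h) - pot γ q = segI γ q (q + h) := by
    have := triangle_identity γ hγ hLag q (q + h)
    unfold pot
    linarith
  have hseg : segI γ q (q + h) = ∫ s in (0:ℝ)..1, pairing (γ (q + s • h)) h := by
    unfold segI
    apply intervalIntegral.integral_congr
    intro s _
    rw [add_sub_cancel_left]
  have hconst : (innerSL ℝ (γ q)) h = ∫ _s in (0:ℝ)..1, pairing (γ q) h := by
    rw [intervalIntegral.integral_const]
    simp [innerSL_apply_apply, pairing_eq_inner]
  have hint1 : IntervalIntegrable (fun s => pairing (γ (q + s • h)) h)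
      MeasureTheory.volume 0 1 := by
    apply Continuous.intervalIntegrable
    exact pairing_continuous.comp ((hγ.comp
      (continuous_const.add (continuous_id.smul continuous_const))).prodMk continuous_const)
  have hint2 : IntervalIntegrable (fun _s : ℝ => pairing (γ q) h)
      MeasureTheory.volume 0 1 := intervalIntegrable_const
  have hkey : pot γ (q + h) - pot γ q - (innerSL ℝ (γ q)) h
      = ∫ s in (0:ℝ)..1, (pairing (γ (q + s • h)) h - pairing (γ q) h) := by
    rw [hdiff, hseg, hconst, ← intervalIntegral.integral_sub hint1 hint2]
  rw [hkey]
  have hbound : ∀ s ∈ Set.uIoc (0:ℝ) 1,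
      ‖pairing (γ (q + s • h)) h - pairing (γ q) h‖ ≤ c * ‖h‖ := by
    intro s hs
    rw [Set.uIoc_of_le (by norm_num : (0:ℝ) ≤ 1)] at hs
    have h1 : pairing (γ (q + s • h)) h - pairing (γ q) h
        = pairing (γ (q + s • h) - γ q) h := by
      rw [pairing_eq_inner, pairing_eq_inner, pairing_eq_inner, inner_sub_left]
    rw [h1, Real.norm_eq_abs]
    calc |pairing (γ (q + s • h) - γ q) h| ≤ ‖γ (q + s • h) - γ q‖ * ‖h‖ := abs_pairing_le _ _
      _ ≤ c * ‖h‖ := by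
          apply mul_le_mul_of_nonneg_right _ (norm_nonneg h)
          have hd : dist (q + s • h) q < δ := by
            rw [dist_eq_norm, add_sub_cancel_left, norm_smul, Real.norm_eq_abs]
            have hs1 : |s| ≤ 1 := abs_le.mpr ⟨by linarith [hs.1], hs.2⟩
            have : ‖h‖ < δ := by
              have := mem_ball_iff_norm.mp hh
              simpa using this
            nlinarith [norm_nonneg h, abs_nonneg s]
          have := hcont hd
          rw [dist_eq_norm] at this
          exact this.le
  calc ‖∫ s in (0:ℝ)..1, (pairing (γ (q + s • h)) h - pairing (γ q) h)‖
      ≤ c * ‖h‖ * |1 - 0| := intervalIntegral.norm_integral_le_of_norm_le_const hbound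
    _ = c * ‖h‖ := by norm_num

lemma pot_sub_le (γ : Ed d → Ed d) (hγ : Continuous γ)
    (hLag : ∀ ν : ℝ → Ed d, ContDiff ℝ 1 ν → (∀ t, ν (t+1) = ν t) →
      ∫ t in (0:ℝ)..1, pairing (γ (ν t)) (deriv ν t) = 0)
    {Γ : ℝ} (hΓ : ∀ x, ‖γ x‖ ≤ Γ) (a b : Ed d) :
    ‖pot γ b - pot γ a‖ ≤ Γ * ‖b - a‖ := by
  apply Convex.norm_image_sub_le_of_norm_hasFDerivWithin_le
    (fun x _ => (pot_hasFDerivAt γ hγ hLag x).hasFDerivWithinAt)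
    (fun x _ => ?_) convex_univ (Set.mem_univ a) (Set.mem_univ b)
  rw [innerSL_apply_norm]
  exact hΓ x

end SmoothLoop

namespace SCalc

variable {S : Ed d × Ed d → ℝ}

/-- first partial has a derivative given by the total derivative composed with `(·, 0)`. -/
lemma hasFDerivAt_fst (hS : ContDiff ℝ 2 S) (a b : Ed d) :
    HasFDerivAt (fun x => S (x, b))
      ((fderiv ℝ S (a, b)).comp ((ContinuousLinearMap.id ℝ (Ed d)).prod 0)) a := by
  have hinner : HasFDerivAt (fun x : Ed d => (x, b))
      ((ContinuousLinearMap.id ℝ (Ed d)).prod 0) a :=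
    (hasFDerivAt_id a).prodMk (hasFDerivAt_const b a)
  have houter : HasFDerivAt S (fderiv ℝ S (a, b)) (a, b) :=
    ((hS.differentiable (by norm_num)) (a, b)).hasFDerivAt
  exact houter.comp a hinner

lemma hasFDerivAt_snd (hS : ContDiff ℝ 2 S) (a b : Ed d) :
    HasFDerivAt (fun y => S (a, y))
      ((fderiv ℝ S (a, b)).comp ((0 : Ed d →L[ℝ] Ed d).prod (ContinuousLinearMap.id ℝ (Ed d)))) b := by
  have hinner : HasFDerivAt (fun y : Ed d => (a, y))
      ((0 : Ed d →L[ℝ] Ed d).prod (ContinuousLinearMap.id ℝ (Ed d))) b :=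
    (hasFDerivAt_const a b).prodMk (hasFDerivAt_id b)
  have houter : HasFDerivAt S (fderiv ℝ S (a, b)) (a, b) :=
    ((hS.differentiable (by norm_num)) (a, b)).hasFDerivAt
  exact houter.comp b hinner

lemma fderiv_fst_apply (hS : ContDiff ℝ 2 S) (a b v : Ed d) :
    fderiv ℝ (fun x => S (x, b)) a v = fderiv ℝ S (a, b) (v, 0) := by
  rw [(hasFDerivAt_fst hS a b).fderiv]
  simp

lemma fderiv_snd_apply (hS : ContDiff ℝ 2 S) (a b v : Ed d) :
    fderiv ℝ (fun y => S (a, y)) b v = fderiv ℝ S (a, b) (0, v) := by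
  rw [(hasFDerivAt_snd hS a b).fderiv]
  simp

lemma contDiff_fderiv (hS : ContDiff ℝ 2 S) : ContDiff ℝ 1 (fderiv ℝ S) :=
  hS.fderiv_right (by norm_num)

lemma hasFDerivAt_fderiv (hS : ContDiff ℝ 2 S) (p : Ed d × Ed d) :
    HasFDerivAt (fderiv ℝ S) (fderiv ℝ (fderiv ℝ S) p) p :=
  (((contDiff_fderiv hS).differentiable (by norm_num)) p).hasFDerivAt

/-- `Φ_{a,w} : Y ↦ ∂₁S(a, Y)(w)` has a derivative at `b`. -/
lemma Phi_hasFDerivAt (hS : ContDiff ℝ 2 S) (a w b : Ed d) :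
    HasFDerivAt (fun Y => fderiv ℝ (fun x => S (x, Y)) a w)
      ((ContinuousLinearMap.apply ℝ ℝ ((w, 0) : Ed d × Ed d)).comp
        ((fderiv ℝ (fderiv ℝ S) (a, b)).comp
          ((0 : Ed d →L[ℝ] Ed d).prod (ContinuousLinearMap.id ℝ (Ed d))))) b := by
  have hfun : (fun Y => fderiv ℝ (fun x => S (x, Y)) a w)
      = fun Y => (ContinuousLinearMap.apply ℝ ℝ ((w, 0) : Ed d × Ed d))
          ((fderiv ℝ S) ((a, Y))) := by
    funext Y
    rw [fderiv_fst_apply hS a Y w]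
    rfl
  rw [hfun]
  have hinner : HasFDerivAt (fun Y : Ed d => (a, Y))
      ((0 : Ed d →L[ℝ] Ed d).prod (ContinuousLinearMap.id ℝ (Ed d))) b :=
    (hasFDerivAt_const a b).prodMk (hasFDerivAt_id b)
  have hmid := (hasFDerivAt_fderiv hS (a, b)).comp b hinner
  exact ((ContinuousLinearMap.apply ℝ ℝ ((w, 0) : Ed d × Ed d)).hasFDerivAt).comp b hmid

lemma mixedS_eq (hS : ContDiff ℝ 2 S) (a b w : Ed d) :
    mixedS S a b w = fderiv ℝ (fderiv ℝ S) (a, b) (0, w) (w, 0) := by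
  unfold mixedS
  rw [(Phi_hasFDerivAt hS a w b).fderiv]
  simp

/-- `Ψ_{b,w} : x ↦ ∂₂S(x, b)(w)` has a derivative at `a`. -/
lemma Psi_hasFDerivAt (hS : ContDiff ℝ 2 S) (b w a : Ed d) :
    HasFDerivAt (fun x => fderiv ℝ (fun y => S (x, y)) b w)
      ((ContinuousLinearMap.apply ℝ ℝ ((0, w) : Ed d × Ed d)).comp
        ((fderiv ℝ (fderiv ℝ S) (a, b)).comp
          ((ContinuousLinearMap.id ℝ (Ed d)).prod 0))) a := by
  have hfun : (fun x => fderiv ℝ (fun y => S (x, y)) b w)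
      = fun x => (ContinuousLinearMap.apply ℝ ℝ ((0, w) : Ed d × Ed d))
          ((fderiv ℝ S) ((x, b))) := by
    funext x
    rw [fderiv_snd_apply hS x b w]
    rfl
  rw [hfun]
  have hinner : HasFDerivAt (fun x : Ed d => (x, b))
      ((ContinuousLinearMap.id ℝ (Ed d)).prod 0) a :=
    (hasFDerivAt_id a).prodMk (hasFDerivAt_const b a)
  have hmid := (hasFDerivAt_fderiv hS (a, b)).comp a hinner
  exact ((ContinuousLinearMap.apply ℝ ℝ ((0, w) : Ed d × Ed d)).hasFDerivAt).comp a hmid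

/-- symmetry of the mixed second derivative. -/
lemma mixed_symm (hS : ContDiff ℝ 2 S) (a b w : Ed d) :
    fderiv ℝ (fderiv ℝ S) (a, b) (w, 0) (0, w) = mixedS S a b w := by
  rw [mixedS_eq hS a b w]
  have hf : ∀ p : Ed d × Ed d, HasFDerivAt S (fderiv ℝ S p) p := fun p =>
    ((hS.differentiable (by norm_num)) p).hasFDerivAt
  exact second_derivative_symmetric hf (hasFDerivAt_fderiv hS (a, b)) _ _

lemma line_hasDerivAt_Phi (hS : ContDiff ℝ 2 S) (a w Q₀ : Ed d) (t : ℝ) :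
    HasDerivAt (fun t : ℝ => fderiv ℝ (fun x => S (x, Q₀ + t • w)) a w)
      (mixedS S a (Q₀ + t • w) w) t := by
  have hline : HasDerivAt (fun t : ℝ => Q₀ + t • w) w t := by
    have := ((hasDerivAt_id t).smul_const w).const_add Q₀
    simpa using this
  have hcomp := (Phi_hasFDerivAt hS a w (Q₀ + t • w)).comp_hasDerivAt t hline
  have heq : mixedS S a (Q₀ + t • w) w
      = ((ContinuousLinearMap.apply ℝ ℝ ((w, 0) : Ed d × Ed d)).comp
        ((fderiv ℝ (fderiv ℝ S) (a, Q₀ + t • w)).comp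
          ((0 : Ed d →L[ℝ] Ed d).prod (ContinuousLinearMap.id ℝ (Ed d))))) w := by
    unfold mixedS
    rw [(Phi_hasFDerivAt hS a w (Q₀ + t • w)).fderiv]
  rw [heq]
  exact hcomp

lemma line_hasDerivAt_Psi (hS : ContDiff ℝ 2 S) (b w a₀ u : Ed d) (t : ℝ) :
    HasDerivAt (fun t : ℝ => fderiv ℝ (fun y => S (a₀ + t • u, y)) b w)
      (fderiv ℝ (fderiv ℝ S) (a₀ + t • u, b) (u, 0) (0, w)) t := by
  have hline : HasDerivAt (fun t : ℝ => a₀ + t • u) u t := by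
    have := ((hasDerivAt_id t).smul_const u).const_add a₀
    simpa using this
  have hcomp := (Psi_hasFDerivAt hS b w (a₀ + t • u)).comp_hasDerivAt t hline
  exact hcomp.congr_deriv (by simp)

/-- Monotonicity of `∂₁S(a, ·)` (strongly monotone decreasing). -/
lemma mono_snd (hS : ContDiff ℝ 2 S) {α : ℝ}
    (hα : ∀ q Q v : Ed d, mixedS S q Q v ≤ -α * ‖v‖ ^ 2) (a Q Q' : Ed d) :
    fderiv ℝ (fun x => S (x, Q)) a (Q - Q') - fderiv ℝ (fun x => S (x, Q')) a (Q - Q')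
      ≤ -α * ‖Q - Q'‖ ^ 2 := by
  set w := Q - Q' with hw
  set g : ℝ → ℝ := fun t => fderiv ℝ (fun x => S (x, Q' + t • w)) a w with hg
  have hgd : ∀ t : ℝ, HasDerivAt g (mixedS S a (Q' + t • w) w) t := fun t =>
    line_hasDerivAt_Phi hS a w Q' t
  obtain ⟨ξ, _, hξ⟩ := exists_hasDerivAt_eq_slope g
    (fun t => mixedS S a (Q' + t • w) w) (by norm_num : (0:ℝ) < 1)
    (fun t _ => (hgd t).continuousAt.continuousWithinAt) (fun t _ => hgd t)
  have hval : g 1 - g 0 ≤ -α * ‖w‖ ^ 2 := by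
    have h1 : g 1 - g 0 = mixedS S a (Q' + ξ • w) w := by
      rw [hξ]; ring
    rw [h1]
    exact hα _ _ _
  have hQ : Q' + (1:ℝ) • w = Q := by rw [one_smul, hw]; abel
  have hQ' : Q' + (0:ℝ) • w = Q' := by rw [zero_smul, add_zero]
  have hg1 : g 1 = fderiv ℝ (fun x => S (x, Q)) a w := by rw [hg]; simp only [hQ]
  have hg0 : g 0 = fderiv ℝ (fun x => S (x, Q')) a w := by rw [hg]; simp only [hQ']
  rw [hg1, hg0] at hval
  exact hval

/-- Monotonicity of `∂₂S(·, b)`. -/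
lemma mono_fst (hS : ContDiff ℝ 2 S) {α : ℝ}
    (hα : ∀ q Q v : Ed d, mixedS S q Q v ≤ -α * ‖v‖ ^ 2) (b a a' : Ed d) :
    fderiv ℝ (fun y => S (a, y)) b (a - a') - fderiv ℝ (fun y => S (a', y)) b (a - a')
      ≤ -α * ‖a - a'‖ ^ 2 := by
  set w := a - a' with hw
  set g : ℝ → ℝ := fun t => fderiv ℝ (fun y => S (a' + t • w, y)) b w with hg
  have hgd : ∀ t : ℝ, HasDerivAt g (mixedS S (a' + t • w) b w) t := by
    intro t
    have := line_hasDerivAt_Psi hS b w a' w t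
    rwa [mixed_symm hS] at this
  obtain ⟨ξ, _, hξ⟩ := exists_hasDerivAt_eq_slope g
    (fun t => mixedS S (a' + t • w) b w) (by norm_num : (0:ℝ) < 1)
    (fun t _ => (hgd t).continuousAt.continuousWithinAt) (fun t _ => hgd t)
  have hval : g 1 - g 0 ≤ -α * ‖w‖ ^ 2 := by
    have h1 : g 1 - g 0 = mixedS S (a' + ξ • w) b w := by rw [hξ]; ring
    rw [h1]
    exact hα _ _ _
  have hQ : a' + (1:ℝ) • w = a := by rw [one_smul, hw]; abel
  have hQ' : a' + (0:ℝ) • w = a' := by rw [zero_smul, add_zero]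
  have hg1 : g 1 = fderiv ℝ (fun y => S (a, y)) b w := by rw [hg]; simp only [hQ]
  have hg0 : g 0 = fderiv ℝ (fun y => S (a', y)) b w := by rw [hg]; simp only [hQ']
  rw [hg1, hg0] at hval
  exact hval

/-- Coercivity of a positive periodic generating function. -/
lemma coercive (hS : ContDiff ℝ 2 S)
    (hper : ∀ (e : Fin d → ℤ) (q Q : Ed d), S (q + intVec d e, Q + intVec d e) = S (q, Q))
    {α : ℝ} (hαpos : 0 < α) (hα : ∀ q Q v : Ed d, mixedS S q Q v ≤ -α * ‖v‖ ^ 2) :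
    ∃ C M : ℝ, 0 ≤ M ∧
      ∀ a b : Ed d, -C - M * ‖b - a‖ + (α/2) * ‖b - a‖ ^ 2 ≤ S (a, b) := by
  -- diagonal bounds
  obtain ⟨C₀, hC₀⟩ := bounded_of_periodic (fun y : Ed d => S (y, y))
    (hS.continuous.comp (continuous_id.prodMk continuous_id))
    (fun e q => hper e q q)
  have hfderiv_per : ∀ (e : Fin d → ℤ) (y : Ed d),
      fderiv ℝ S (y + intVec d e, y + intVec d e) = fderiv ℝ S (y, y) := by
    intro e y
    set E : Ed d × Ed d := (intVec d e, intVec d e) with hE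
    have hfun : (fun p : Ed d × Ed d => S (p + E)) = S := by
      funext p
      show S (p + E) = S p
      have : p + E = (p.1 + intVec d e, p.2 + intVec d e) := rfl
      rw [this, hper e p.1 p.2]
    have htrans : HasFDerivAt (fun p : Ed d × Ed d => S (p + E))
        (fderiv ℝ S ((y, y) + E)) (y, y) := by
      have h1 : HasFDerivAt (fun p : Ed d × Ed d => p + E)
          (ContinuousLinearMap.id ℝ (Ed d × Ed d)) (y, y) := (hasFDerivAt_id _).add_const E
      have h2 := ((hS.differentiable (by norm_num)) ((y, y) + E)).hasFDerivAt
      have := h2.comp ((y, y) : Ed d × Ed d) h1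
      rwa [ContinuousLinearMap.comp_id] at this
    rw [hfun] at htrans
    have h9 : fderiv ℝ S (y, y) = fderiv ℝ S ((y, y) + E) := htrans.fderiv
    have hcoord : ((y, y) : Ed d × Ed d) + E = (y + intVec d e, y + intVec d e) := rfl
    rw [← hcoord, h9]
  obtain ⟨M, hM⟩ := bounded_of_periodic (fun y : Ed d => fderiv ℝ S (y, y))
    ((contDiff_fderiv hS).continuous.comp (continuous_id.prodMk continuous_id))
    (fun e y => hfderiv_per e y)
  have hMnn : 0 ≤ M := le_trans (norm_nonneg _) (hM 0)
  refine ⟨C₀, M, hMnn, fun a b => ?_⟩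
  set w := b - a with hw
  -- derivative lower bound along the segment
  have hkey : ∀ t ∈ Set.Icc (0:ℝ) 1,
      -M * ‖w‖ + t * (α * ‖w‖ ^ 2) ≤ fderiv ℝ (fun y => S (a, y)) (a + t • w) w := by
    intro t ht
    set Y := a + t • w with hY
    set ψ : ℝ → ℝ := fun s => fderiv ℝ (fun y => S (a + s • (t • w), y)) Y w with hψ
    have hψd : ∀ s : ℝ, HasDerivAt ψ
        (fderiv ℝ (fderiv ℝ S) (a + s • (t • w), Y) (t • w, 0) (0, w)) s := fun s =>
      line_hasDerivAt_Psi hS Y w a (t • w) s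
    have hψd' : ∀ s : ℝ, HasDerivAt ψ
        (t * (mixedS S (a + s • (t • w)) Y w)) s := by
      intro s
      have h1 := hψd s
      have h2 : fderiv ℝ (fderiv ℝ S) (a + s • (t • w), Y) (t • w, 0) (0, w)
          = t * (fderiv ℝ (fderiv ℝ S) (a + s • (t • w), Y) (w, 0) (0, w)) := by
        have : ((t • w, 0) : Ed d × Ed d) = t • ((w, 0) : Ed d × Ed d) := by
          rw [Prod.smul_mk, smul_zero]
        rw [this, ContinuousLinearMap.map_smul]
        simp
      rw [h2, mixed_symm hS] at h1
      exact h1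
    obtain ⟨ξ, _, hξ⟩ := exists_hasDerivAt_eq_slope ψ
      (fun s => t * (mixedS S (a + s • (t • w)) Y w)) (by norm_num : (0:ℝ) < 1)
      (fun s _ => (hψd' s).continuousAt.continuousWithinAt) (fun s _ => hψd' s)
    have hslope : ψ 1 - ψ 0 ≤ t * (-α * ‖w‖ ^ 2) := by
      have h1 : ψ 1 - ψ 0 = t * (mixedS S (a + ξ • (t • w)) Y w) := by rw [hξ]; ring
      rw [h1]
      exact mul_le_mul_of_nonneg_left (hα _ _ _) ht.1
    have hψ1 : -M * ‖w‖ ≤ ψ 1 := by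
      have h1 : a + (1:ℝ) • (t • w) = Y := by rw [one_smul, hY]
      have h2 : ψ 1 = fderiv ℝ (fun y => S (Y, y)) Y w := by rw [hψ]; simp only [h1]
      rw [h2, fderiv_snd_apply hS Y Y w]
      have h3 : |fderiv ℝ S (Y, Y) (0, w)| ≤ M * ‖w‖ := by
        calc |fderiv ℝ S (Y, Y) (0, w)| ≤ ‖fderiv ℝ S (Y, Y)‖ * ‖((0 : Ed d), w)‖ :=
              (fderiv ℝ S (Y, Y)).le_opNorm _
          _ ≤ M * ‖w‖ := by
              apply mul_le_mul (hM Y) _ (norm_nonneg _) (le_trans (norm_nonneg _) (hM 0))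
              rw [Prod.norm_def]
              simp
      nlinarith [abs_nonneg (fderiv ℝ S (Y, Y) (0, w)), le_abs_self (fderiv ℝ S (Y, Y) (0, w)),
        neg_abs_le (fderiv ℝ S (Y, Y) (0, w))]
    have hψ0 : ψ 0 = fderiv ℝ (fun y => S (a, y)) Y w := by
      have h1 : a + (0:ℝ) • (t • w) = a := by rw [zero_smul, add_zero]
      rw [hψ]; simp only [h1]
    rw [← hψ0]
    nlinarith [hslope, hψ1]
  -- integrate (via MVT on the corrected function)
  set g : ℝ → ℝ := fun t => S (a, a + t • w) with hgdef
  have hgd : ∀ t : ℝ, HasDerivAt g (fderiv ℝ (fun y => S (a, y)) (a + t • w) w) t := by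
    intro t
    have hline : HasDerivAt (fun t : ℝ => a + t • w) w t := by
      have := ((hasDerivAt_id t).smul_const w).const_add a
      simpa using this
    have h1 := (hasFDerivAt_snd hS a (a + t • w)).comp_hasDerivAt t hline
    have h2 : ((fderiv ℝ S (a, a + t • w)).comp
        ((0 : Ed d →L[ℝ] Ed d).prod (ContinuousLinearMap.id ℝ (Ed d)))) w
        = fderiv ℝ (fun y => S (a, y)) (a + t • w) w := by
      rw [fderiv_snd_apply hS a (a + t • w) w]
      simp
    rw [h2] at h1
    exact h1
  set h : ℝ → ℝ := fun t => g t + M * ‖w‖ * t - (α/2) * ‖w‖ ^ 2 * t ^ 2 with hhdef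
  have hhd : ∀ t : ℝ, HasDerivAt h
      (fderiv ℝ (fun y => S (a, y)) (a + t • w) w + M * ‖w‖ - α * ‖w‖ ^ 2 * t) t := by
    intro t
    have h1 := ((hgd t).add_const 0)
    have h2 : HasDerivAt (fun t : ℝ => M * ‖w‖ * t) (M * ‖w‖) t := by
      simpa using (hasDerivAt_id t).const_mul (M * ‖w‖)
    have h3 : HasDerivAt (fun t : ℝ => (α/2) * ‖w‖ ^ 2 * t ^ 2) ((α/2) * ‖w‖ ^ 2 * (2 * t)) t := by
      have := (hasDerivAt_pow 2 t).const_mul ((α/2) * ‖w‖ ^ 2)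
      simpa using this
    have := ((hgd t).add h2).sub h3
    refine this.congr_deriv ?_
    ring
  obtain ⟨ξ, hξmem, hξ⟩ := exists_hasDerivAt_eq_slope h
    (fun t => fderiv ℝ (fun y => S (a, y)) (a + t • w) w + M * ‖w‖ - α * ‖w‖ ^ 2 * t)
    (by norm_num : (0:ℝ) < 1)
    (fun t _ => (hhd t).continuousAt.continuousWithinAt) (fun t _ => hhd t)
  have hd0 : 0 ≤ fderiv ℝ (fun y => S (a, y)) (a + ξ • w) w + M * ‖w‖ - α * ‖w‖ ^ 2 * ξ := by
    have := hkey ξ ⟨hξmem.1.le, hξmem.2.le⟩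
    nlinarith
  have hmono : h 0 ≤ h 1 := by
    have : (h 1 - h 0) / (1 - 0) = h 1 - h 0 := by norm_num
    rw [this] at hξ
    linarith [hξ ▸ hd0]
  have hg0 : g 0 = S (a, a) := by rw [hgdef]; simp
  have hg1 : g 1 = S (a, b) := by
    rw [hgdef]
    simp only [one_smul, hw]
    norm_num
  have hSaa : -C₀ ≤ S (a, a) := by
    have := hC₀ a
    rw [Real.norm_eq_abs] at this
    linarith [neg_abs_le (S (a, a))]
  rw [hhdef] at hmono
  simp only [hg0, hg1] at hmono
  nlinarith [hmono, hSaa]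

end SCalc

section Master

variable {F : Ed d × Ed d → Ed d × Ed d} {S : Ed d × Ed d → ℝ}

/-- The broken chain determined by a tuple of free points, with endpoint pinned at `bm`. -/
def chainPts (bm : Ed d) (n : ℕ) (ξ : Fin n → Ed d) (j : ℕ) : Ed d :=
  if h : j < n then ξ ⟨j, h⟩ else bm

/-- the orbit positions of the graph of `γ`. -/
def Xpt (F : Ed d × Ed d → Ed d × Ed d) (γ : Ed d → Ed d) (j : ℕ) (q : Ed d) : Ed d :=
  (F^[j] (q, γ q)).1

lemma chainPts_lt {bm : Ed d} {n : ℕ} {ξ : Fin n → Ed d} {j : ℕ} (h : j < n) :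
    chainPts bm n ξ j = ξ ⟨j, h⟩ := dif_pos h

lemma chainPts_ge {bm : Ed d} {n : ℕ} {ξ : Fin n → Ed d} {j : ℕ} (h : ¬ j < n) :
    chainPts bm n ξ j = bm := dif_neg h

lemma chainPts_update {bm : Ed d} {n : ℕ} {ξ : Fin n → Ed d} {k : Fin n} {x : Ed d} (j : ℕ) :
    chainPts bm n (Function.update ξ k x) j = if j = k.val then x else chainPts bm n ξ j := by
  by_cases h : j < n
  · rw [chainPts_lt h, chainPts_lt h, Function.update_apply]
    by_cases h2 : j = k.val
    · rw [if_pos h2, if_pos (by exact Fin.ext h2)]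
    · rw [if_neg h2, if_neg (by intro hc; exact h2 (by rw [← hc]))]
  · have h2 : j ≠ k.val := by
      intro hc
      exact h (hc ▸ k.isLt)
    rw [chainPts_ge h, chainPts_ge h, if_neg h2]

lemma chainPts_continuous (bm : Ed d) (n : ℕ) (j : ℕ) :
    Continuous fun ξ : Fin n → Ed d => chainPts bm n ξ j := by
  by_cases h : j < n
  · have : (fun ξ : Fin n → Ed d => chainPts bm n ξ j) = fun ξ => ξ ⟨j, h⟩ := by
      funext ξ; exact chainPts_lt h
    rw [this]; exact continuous_apply _
  · have : (fun ξ : Fin n → Ed d => chainPts bm n ξ j) = fun _ => bm := by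
      funext ξ; exact chainPts_ge h
    rw [this]; exact continuous_const

/-- telescoping norm estimate. -/
lemma tele_norm (c : ℕ → Ed d) (k l : ℕ) :
    ‖c k - c (k + l)‖ ≤ ∑ j ∈ Finset.range l, ‖c (k + j + 1) - c (k + j)‖ := by
  induction l with
  | zero => simp
  | succ l ih =>
      have h1 : c k - c (k + (l+1)) = (c k - c (k + l)) + (c (k + l) - c (k + l + 1)) := by
        have : k + (l + 1) = k + l + 1 := by omega
        rw [this]; abel
      rw [h1, Finset.sum_range_succ]
      calc ‖(c k - c (k + l)) + (c (k + l) - c (k + l + 1))‖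
          ≤ ‖c k - c (k + l)‖ + ‖c (k + l) - c (k + l + 1)‖ := norm_add_le _ _
        _ ≤ (∑ j ∈ Finset.range l, ‖c (k + j + 1) - c (k + j)‖)
              + ‖c (k + l) - c (k + l + 1)‖ := by linarith
        _ = (∑ j ∈ Finset.range l, ‖c (k + j + 1) - c (k + j)‖)
              + ‖c (k + l + 1) - c (k + l)‖ := by rw [norm_sub_rev]

def Ppt (F : Ed d × Ed d → Ed d × Ed d) (γ : Ed d → Ed d) (j : ℕ) (q : Ed d) : Ed d :=
  (F^[j] (q, γ q)).2

set_option maxHeartbeats 2000000 in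
theorem master
    (F : Ed d × Ed d → Ed d × Ed d) (S : Ed d × Ed d → ℝ)
    (Tinv : Ed d × Ed d → Ed d × Ed d)
    (hTl : Function.LeftInverse Tinv (fun x : Ed d × Ed d => (x.1, (F x).1)))
    (hTr : Function.RightInverse Tinv (fun x : Ed d × Ed d => (x.1, (F x).1)))
    (hS : ContDiff ℝ 2 S)
    (hdq : ∀ q p v : Ed d, fderiv ℝ (fun q' => S (q', (F (q, p)).1)) q v = -(pairing p v))
    (hdQ : ∀ q p v : Ed d, fderiv ℝ (fun Q' => S (q, Q')) (F (q, p)).1 v = pairing (F (q, p)).2 v)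
    (hper : ∀ (e : Fin d → ℤ) (q Q : Ed d), S (q + intVec d e, Q + intVec d e) = S (q, Q))
    {α : ℝ} (hαpos : 0 < α) (hα : ∀ q Q v : Ed d, mixedS S q Q v ≤ -α * ‖v‖ ^ 2)
    (m : Fin d → ℤ) (n : ℕ) (hn : 0 < n)
    (γ : Ed d → Ed d) (hγc : Continuous γ)
    (hγper : ∀ (e : Fin d → ℤ) (q : Ed d), γ (q + intVec d e) = γ q)
    (v : Ed d → ℝ) (hv : ∀ q, HasFDerivAt v (innerSL ℝ (γ q)) q)
    (hgraph : ∀ q : Ed d, F^[n] (q, γ q) = (q + intVec d m, γ q))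
    (b : Ed d) :
    (∀ ξ : Fin n → Ed d,
      v b + (∑ j ∈ Finset.range n, S (Xpt F γ j b, Xpt F γ (j+1) b))
        ≤ v (chainPts (b + intVec d m) n ξ 0)
          + ∑ j ∈ Finset.range n,
              S (chainPts (b + intVec d m) n ξ j, chainPts (b + intVec d m) n ξ (j+1))) ∧
    (∀ ξ : Fin n → Ed d,
      (v (chainPts (b + intVec d m) n ξ 0)
          + ∑ j ∈ Finset.range n,
              S (chainPts (b + intVec d m) n ξ j, chainPts (b + intVec d m) n ξ (j+1)))
        = v b + (∑ j ∈ Finset.range n, S (Xpt F γ j b, Xpt F γ (j+1) b)) →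
      ∀ j ≤ n, chainPts (b + intVec d m) n ξ j = Xpt F γ j b) := by
  classical
  set bm : Ed d := b + intVec d m with hbm
  set W := (Fin n → Ed d)
  set G : (Fin n → Ed d) → ℝ := fun ξ =>
    v (chainPts bm n ξ 0) + ∑ j ∈ Finset.range n, S (chainPts bm n ξ j, chainPts bm n ξ (j+1))
    with hG
  -- twist inverse momentum
  set π : Ed d → Ed d → Ed d := fun a c => (Tinv (a, c)).2 with hπdef
  have hπ1 : ∀ a c : Ed d, (F (a, π a c)).1 = c := by
    intro a c
    have h1 := hTr (a, c)
    have h2 : (Tinv (a, c)).1 = a := congrArg Prod.fst h1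
    have h3 : Tinv (a, c) = (a, π a c) := by
      conv_lhs => rw [← Prod.mk.eta (p := Tinv (a, c))]
      rw [h2]
    have h4 := congrArg Prod.snd h1
    rw [h3] at h4
    exact h4
  have hπ2 : ∀ a p : Ed d, π a ((F (a, p)).1) = p := by
    intro a p
    have h1 := hTl (a, p)
    exact congrArg Prod.snd h1
  -- partial derivative formulas
  have Sd1f : ∀ a c v' : Ed d,
      fderiv ℝ (fun x => S (x, c)) a v' = -(pairing (π a c) v') := by
    intro a c v'
    have := hdq a (π a c) v'
    rwa [hπ1 a c] at this
  have Sd2f : ∀ a c v' : Ed d,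
      fderiv ℝ (fun y => S (a, y)) c v' = pairing ((F (a, π a c)).2) v' := by
    intro a c v'
    have := hdQ a (π a c) v'
    rwa [hπ1 a c] at this
  -- orbit facts
  have hXP : ∀ (j : ℕ) (q : Ed d), F^[j] (q, γ q) = (Xpt F γ j q, Ppt F γ j q) := by
    intro j q
    rfl
  have hX0 : ∀ q : Ed d, Xpt F γ 0 q = q := fun q => rfl
  have hP0 : ∀ q : Ed d, Ppt F γ 0 q = γ q := fun q => rfl
  have hstep : ∀ (j : ℕ) (q : Ed d),
      F (Xpt F γ j q, Ppt F γ j q) = (Xpt F γ (j+1) q, Ppt F γ (j+1) q) := by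
    intro j q
    rw [← hXP j q, ← hXP (j+1) q, Function.iterate_succ_apply']
  have hXn : ∀ q : Ed d, Xpt F γ n q = q + intVec d m := by
    intro q
    have := congrArg Prod.fst (hgraph q)
    exact this
  have hπorbit : ∀ (j : ℕ) (q : Ed d),
      π (Xpt F γ j q) (Xpt F γ (j+1) q) = Ppt F γ j q := by
    intro j q
    have h1 := hπ2 (Xpt F γ j q) (Ppt F γ j q)
    rw [hstep j q] at h1
    exact h1
  -- the graph tuple
  set ξg : Fin n → Ed d := fun k => Xpt F γ k.val b with hξg
  have hgt : ∀ j, j ≤ n → chainPts bm n ξg j = Xpt F γ j b := by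
    intro j hj
    by_cases h : j < n
    · rw [chainPts_lt h]
    · have hj' : j = n := by omega
      rw [chainPts_ge h, hj', hXn b]
  have hGg : G ξg = v b + ∑ j ∈ Finset.range n, S (Xpt F γ j b, Xpt F γ (j+1) b) := by
    show v (chainPts bm n ξg 0)
        + (∑ j ∈ Finset.range n, S (chainPts bm n ξg j, chainPts bm n ξg (j+1))) = _
    congr 1
    · rw [hgt 0 (by omega), hX0]
    · apply Finset.sum_congr rfl
      intro j hj
      have hj' := Finset.mem_range.mp hj
      rw [hgt j (by omega), hgt (j+1) (by omega)]
  -- ANY GLOBAL MINIMIZER IS THE GRAPH CHAIN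
  have hMIN : ∀ ξ : Fin n → Ed d, (∀ η, G ξ ≤ G η) →
      ∀ j ≤ n, chainPts bm n ξ j = Xpt F γ j b := by
    intro ξ hmin
    set c : ℕ → Ed d := chainPts bm n ξ with hcdef
    have hc0 : c 0 = ξ ⟨0, hn⟩ := chainPts_lt hn
    have hcn : c n = bm := chainPts_ge (lt_irrefl n)
    set a0 : Ed d := c 0 with ha0
    -- first-order condition at slot 0
    have hEL0 : γ a0 = π a0 (c 1) := by
      set f0 : Ed d → ℝ := fun x1 => v x1 + S (x1, c 1) with hf0
      have hdecomp : ∀ x1 : Ed d, G (Function.update ξ (⟨0, hn⟩ : Fin n) x1)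
          = f0 x1 + ∑ j ∈ (Finset.range n).erase 0, S (c j, c (j+1)) := by
        intro x1
        have hupd : ∀ j, chainPts bm n (Function.update ξ (⟨0, hn⟩ : Fin n) x1) j
            = if j = 0 then x1 else c j := fun j => chainPts_update j
        show v (chainPts bm n (Function.update ξ (⟨0, hn⟩ : Fin n) x1) 0)
            + (∑ j ∈ Finset.range n,
                S (chainPts bm n (Function.update ξ (⟨0, hn⟩ : Fin n) x1) j,
                  chainPts bm n (Function.update ξ (⟨0, hn⟩ : Fin n) x1) (j+1))) = _
        have hsum : (∑ j ∈ Finset.range n,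
            S (chainPts bm n (Function.update ξ (⟨0, hn⟩ : Fin n) x1) j,
              chainPts bm n (Function.update ξ (⟨0, hn⟩ : Fin n) x1) (j+1)))
            = S (x1, c 1) + ∑ j ∈ (Finset.range n).erase 0, S (c j, c (j+1)) := by
          rw [← Finset.add_sum_erase (Finset.range n) _ (Finset.mem_range.mpr hn)]
          congr 1
          · rw [hupd 0, hupd 1, if_pos rfl, if_neg one_ne_zero]
          · apply Finset.sum_congr rfl
            intro j hj
            have hj0 : j ≠ 0 := (Finset.mem_erase.mp hj).1
            rw [hupd j, hupd (j+1), if_neg hj0, if_neg (Nat.succ_ne_zero j)]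
        rw [hsum, hupd 0, if_pos rfl, hf0]
        ring
      have hlocmin : IsLocalMin f0 a0 := by
        apply Filter.Eventually.of_forall
        intro x1
        have h1 := hmin (Function.update ξ (⟨0, hn⟩ : Fin n) x1)
        rw [hdecomp x1] at h1
        have h2 : G ξ = f0 a0 + ∑ j ∈ (Finset.range n).erase 0, S (c j, c (j+1)) := by
          have h3 := hdecomp (ξ ⟨0, hn⟩)
          rw [Function.update_eq_self] at h3
          rw [h3, hc0]
        rw [h2] at h1
        linarith
      have hfd0 : fderiv ℝ f0 a0 = 0 := hlocmin.fderiv_eq_zero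
      have hfd' : HasFDerivAt f0 (innerSL ℝ (γ a0)
          + ((fderiv ℝ S (a0, c 1)).comp ((ContinuousLinearMap.id ℝ (Ed d)).prod 0))) a0 :=
        (hv a0).add (SCalc.hasFDerivAt_fst hS a0 (c 1))
      have hzero : (innerSL ℝ (γ a0)
          + ((fderiv ℝ S (a0, c 1)).comp ((ContinuousLinearMap.id ℝ (Ed d)).prod 0)))
          = 0 := by rw [← hfd'.fderiv]; exact hfd0
      apply pairing_eq_of_forall
      intro v'
      have h5 : (innerSL ℝ (γ a0)) v'
          + ((fderiv ℝ S (a0, c 1)).comp ((ContinuousLinearMap.id ℝ (Ed d)).prod 0)) v' = 0 := by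
        rw [← ContinuousLinearMap.add_apply, hzero, ContinuousLinearMap.zero_apply]
      have h6 : ((fderiv ℝ S (a0, c 1)).comp ((ContinuousLinearMap.id ℝ (Ed d)).prod 0)) v'
          = fderiv ℝ (fun x => S (x, c 1)) a0 v' := by
        rw [(SCalc.hasFDerivAt_fst hS a0 (c 1)).fderiv]
      rw [h6, Sd1f a0 (c 1) v'] at h5
      have h7 : (innerSL ℝ (γ a0)) v' = pairing (γ a0) v' := by
        rw [innerSL_apply_apply, pairing_eq_inner]
      rw [h7] at h5
      linarith
    -- interior first-order conditions
    have hELk : ∀ k : ℕ, 0 < k → k < n →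
        (F (c (k-1), π (c (k-1)) (c k))).2 = π (c k) (c (k+1)) := by
      intro k hk0 hkn
      set fk : Ed d → ℝ := fun x1 => S (c (k-1), x1) + S (x1, c (k+1)) with hfk
      have hdecomp : ∀ x1 : Ed d, G (Function.update ξ (⟨k, hkn⟩ : Fin n) x1)
          = v a0 + fk x1
            + ∑ j ∈ ((Finset.range n).erase (k-1)).erase k, S (c j, c (j+1)) := by
        intro x1
        have hupd : ∀ j, chainPts bm n (Function.update ξ (⟨k, hkn⟩ : Fin n) x1) j
            = if j = k then x1 else c j := fun j => chainPts_update j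
        show v (chainPts bm n (Function.update ξ (⟨k, hkn⟩ : Fin n) x1) 0)
            + (∑ j ∈ Finset.range n,
                S (chainPts bm n (Function.update ξ (⟨k, hkn⟩ : Fin n) x1) j,
                  chainPts bm n (Function.update ξ (⟨k, hkn⟩ : Fin n) x1) (j+1))) = _
        have hmem1 : k - 1 ∈ Finset.range n := Finset.mem_range.mpr (by omega)
        have hmem2 : k ∈ (Finset.range n).erase (k-1) :=
          Finset.mem_erase.mpr ⟨by omega, Finset.mem_range.mpr hkn⟩
        have hsum : (∑ j ∈ Finset.range n,
            S (chainPts bm n (Function.update ξ (⟨k, hkn⟩ : Fin n) x1) j,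
              chainPts bm n (Function.update ξ (⟨k, hkn⟩ : Fin n) x1) (j+1)))
            = S (c (k-1), x1) + (S (x1, c (k+1))
              + ∑ j ∈ ((Finset.range n).erase (k-1)).erase k, S (c j, c (j+1))) := by
          rw [← Finset.add_sum_erase (Finset.range n) _ hmem1]
          congr 1
          · rw [hupd (k-1), hupd (k-1+1), if_neg (by omega), if_pos (by omega)]
          · rw [← Finset.add_sum_erase ((Finset.range n).erase (k-1)) _ hmem2]
            congr 1
            · rw [hupd k, hupd (k+1), if_pos rfl, if_neg (by omega)]
            · apply Finset.sum_congr rfl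
              intro j hj
              have h1 := Finset.mem_erase.mp hj
              have h2 := Finset.mem_erase.mp h1.2
              rw [hupd j, hupd (j+1), if_neg h1.1, if_neg (by omega)]
        rw [hsum, hupd 0, if_neg (by omega)]
        simp only [hfk]
        ring
      have hlocmin : IsLocalMin fk (c k) := by
        apply Filter.Eventually.of_forall
        intro x1
        have h1 := hmin (Function.update ξ (⟨k, hkn⟩ : Fin n) x1)
        rw [hdecomp x1] at h1
        have h2 : G ξ = v a0 + fk (c k)
            + ∑ j ∈ ((Finset.range n).erase (k-1)).erase k, S (c j, c (j+1)) := by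
          have h3 := hdecomp (ξ ⟨k, hkn⟩)
          rw [Function.update_eq_self] at h3
          rw [h3, hcdef, chainPts_lt hkn]
        rw [h2] at h1
        linarith
      have hfd0 : fderiv ℝ fk (c k) = 0 := hlocmin.fderiv_eq_zero
      have hfd' : HasFDerivAt fk
          (((fderiv ℝ S (c (k-1), c k)).comp
              ((0 : Ed d →L[ℝ] Ed d).prod (ContinuousLinearMap.id ℝ (Ed d))))
            + ((fderiv ℝ S (c k, c (k+1))).comp
              ((ContinuousLinearMap.id ℝ (Ed d)).prod 0))) (c k) :=
        (SCalc.hasFDerivAt_snd hS (c (k-1)) (c k)).add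
          (SCalc.hasFDerivAt_fst hS (c k) (c (k+1)))
      have hzero : (((fderiv ℝ S (c (k-1), c k)).comp
            ((0 : Ed d →L[ℝ] Ed d).prod (ContinuousLinearMap.id ℝ (Ed d))))
          + ((fderiv ℝ S (c k, c (k+1))).comp
            ((ContinuousLinearMap.id ℝ (Ed d)).prod 0))) = 0 := by
        rw [← hfd'.fderiv]; exact hfd0
      apply pairing_eq_of_forall
      intro v'
      have h5 : ((fderiv ℝ S (c (k-1), c k)).comp
            ((0 : Ed d →L[ℝ] Ed d).prod (ContinuousLinearMap.id ℝ (Ed d)))) v'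
          + ((fderiv ℝ S (c k, c (k+1))).comp
            ((ContinuousLinearMap.id ℝ (Ed d)).prod 0)) v' = 0 := by
        rw [← ContinuousLinearMap.add_apply, hzero, ContinuousLinearMap.zero_apply]
      have h6 : ((fderiv ℝ S (c (k-1), c k)).comp
            ((0 : Ed d →L[ℝ] Ed d).prod (ContinuousLinearMap.id ℝ (Ed d)))) v'
          = pairing ((F (c (k-1), π (c (k-1)) (c k))).2) v' := by
        rw [← (SCalc.hasFDerivAt_snd hS (c (k-1)) (c k)).fderiv]
        exact Sd2f (c (k-1)) (c k) v'
      have h7 : ((fderiv ℝ S (c k, c (k+1))).comp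
            ((ContinuousLinearMap.id ℝ (Ed d)).prod 0)) v'
          = -(pairing (π (c k) (c (k+1))) v') := by
        rw [← (SCalc.hasFDerivAt_fst hS (c k) (c (k+1))).fderiv]
        exact Sd1f (c k) (c (k+1)) v'
      rw [h6, h7] at h5
      linarith
    -- induction along the orbit
    have hORB : ∀ j : ℕ, j < n → F^[j] (a0, γ a0) = (c j, π (c j) (c (j+1))) := by
      intro j
      induction j with
      | zero =>
          intro _
          rw [Function.iterate_zero_apply]
          have : γ a0 = π (c 0) (c 1) := by rw [← ha0]; exact hEL0
          rw [ha0] at *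
          exact Prod.ext rfl hEL0
      | succ j ih =>
          intro hjn
          have hjn' : j < n := by omega
          rw [Function.iterate_succ_apply', ih hjn']
          have hfst : (F (c j, π (c j) (c (j+1)))).1 = c (j+1) := hπ1 _ _
          have hsnd : (F (c j, π (c j) (c (j+1)))).2 = π (c (j+1)) (c (j+2)) := by
            have := hELk (j+1) (by omega) hjn
            have hj1 : j + 1 - 1 = j := by omega
            rw [hj1] at this
            exact this
          exact Prod.ext hfst hsnd
    -- conclude
    have hlast : Xpt F γ n a0 = c n := by
      have h1 : n = (n-1) + 1 := by omega
      have h2 := hORB (n-1) (by omega)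
      show (F^[n] (a0, γ a0)).1 = c n
      rw [h1, Function.iterate_succ_apply', h2]
      have h3 : n - 1 + 1 = n := by omega
      rw [hπ1, h3]
    have ha0b : a0 = b := by
      have h1 : Xpt F γ n a0 = a0 + intVec d m := hXn a0
      rw [hlast, hcn, hbm] at h1
      exact (add_right_cancel h1.symm)
    intro j hj
    by_cases h : j < n
    · have := congrArg Prod.fst (hORB j h)
      show c j = _
      rw [← ha0b]
      exact this.symm
    · have hj' : j = n := by omega
      show c j = _
      rw [hj', hcn, hXn b, hbm]
  -- EXISTENCE OF A MINIMIZER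
  have hEX : ∃ ξ : Fin n → Ed d, ∀ η, G ξ ≤ G η := by
    obtain ⟨Γ, hΓ⟩ := bounded_of_periodic γ hγc hγper
    have hΓ0 : 0 ≤ Γ := le_trans (norm_nonneg _) (hΓ 0)
    obtain ⟨C, M, hM0, hcoer⟩ := SCalc.coercive hS hper hαpos hα
    have hvcont : Continuous v := by
      rw [continuous_iff_continuousAt]
      exact fun q => (hv q).differentiableAt.continuousAt
    have hvlip : ∀ x y : Ed d, v x - v y ≤ Γ * ‖x - y‖ := by
      intro x y
      have h1 := Convex.norm_image_sub_le_of_norm_hasFDerivWithin_le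
        (fun z (_ : z ∈ (Set.univ : Set (Ed d))) => (hv z).hasFDerivWithinAt)
        (fun z _ => by rw [innerSL_apply_norm]; exact hΓ z)
        convex_univ (Set.mem_univ y) (Set.mem_univ x)
      have h2 : v x - v y ≤ ‖v x - v y‖ := le_abs_self _
      exact le_trans h2 h1
    have hGcont : Continuous G := by
      rw [hG]
      apply Continuous.add
      · exact hvcont.comp (chainPts_continuous bm n 0)
      · apply continuous_finset_sum
        intro j _
        exact hS.continuous.comp ((chainPts_continuous bm n j).prodMk
          (chainPts_continuous bm n (j+1)))
    set T : (Fin n → Ed d) → ℝ := fun ξ =>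
      ∑ j ∈ Finset.range n, ‖chainPts bm n ξ (j+1) - chainPts bm n ξ j‖ with hT
    have hTnn : ∀ ξ, 0 ≤ T ξ := fun ξ => Finset.sum_nonneg fun j _ => norm_nonneg _
    have hTbd : ∀ (ξ : Fin n → Ed d) (k : ℕ), k ≤ n → ‖chainPts bm n ξ k - bm‖ ≤ T ξ := by
      intro ξ k hk
      have h1 := tele_norm (chainPts bm n ξ) k (n - k)
      have h2 : k + (n - k) = n := by omega
      rw [h2, chainPts_ge (lt_irrefl n)] at h1
      refine le_trans h1 ?_
      have h3 : ∑ j ∈ Finset.range (n - k),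
            ‖chainPts bm n ξ (k + j + 1) - chainPts bm n ξ (k + j)‖
          = ∑ i ∈ Finset.Ico k n, ‖chainPts bm n ξ (i + 1) - chainPts bm n ξ i‖ := by
        rw [Finset.sum_Ico_eq_sum_range]
      rw [h3, hT]
      apply Finset.sum_le_sum_of_subset_of_nonneg
      · intro i hi
        rw [Finset.mem_Ico] at hi
        exact Finset.mem_range.mpr hi.2
      · intro i _ _
        exact norm_nonneg _
    have hstepS : ∀ x y : Ed d, -C - M^2/α + (α/4) * ‖y - x‖^2 ≤ S (x, y) := by
      intro x y
      have h1 := hcoer x y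
      have h2 : 0 ≤ (α * ‖y - x‖ - 2*M)^2 := sq_nonneg _
      have h3 : (α/4) * ‖y - x‖^2 - M * ‖y - x‖ + M^2/α
          = (α * ‖y - x‖ - 2*M)^2 / (4*α) := by
        field_simp
        ring
      nlinarith [div_nonneg h2 (by positivity : (0:ℝ) ≤ 4*α)]
    have hn' : (0:ℝ) < n := by exact_mod_cast hn
    have hGlower : ∀ ξ, v bm - Γ * T ξ + (n : ℝ) * (-C - M^2/α)
        + (α/(4*(n:ℝ))) * (T ξ)^2 ≤ G ξ := by
      intro ξ
      have hv1 : v bm - Γ * T ξ ≤ v (chainPts bm n ξ 0) := by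
        have h1 := hvlip bm (chainPts bm n ξ 0)
        have h2 := hTbd ξ 0 (by omega)
        have h3 : ‖bm - chainPts bm n ξ 0‖ = ‖chainPts bm n ξ 0 - bm‖ := norm_sub_rev _ _
        have h4 : Γ * ‖bm - chainPts bm n ξ 0‖ ≤ Γ * T ξ := by
          rw [h3]
          exact mul_le_mul_of_nonneg_left h2 hΓ0
        linarith
      have hsum1 : (n:ℝ) * (-C - M^2/α)
          + (α/4) * ∑ j ∈ Finset.range n, ‖chainPts bm n ξ (j+1) - chainPts bm n ξ j‖^2
          ≤ ∑ j ∈ Finset.range n, S (chainPts bm n ξ j, chainPts bm n ξ (j+1)) := by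
        have h1 : ∀ j ∈ Finset.range n,
            (-C - M^2/α) + (α/4) * ‖chainPts bm n ξ (j+1) - chainPts bm n ξ j‖^2
            ≤ S (chainPts bm n ξ j, chainPts bm n ξ (j+1)) := by
          intro j _
          have := hstepS (chainPts bm n ξ j) (chainPts bm n ξ (j+1))
          linarith
        have h2 := Finset.sum_le_sum h1
        rw [Finset.sum_add_distrib, Finset.sum_const, Finset.card_range, ← Finset.mul_sum] at h2
        have h3 : (n : ℝ) * (-C - M^2/α) = n • (-C - M^2/α) := by
          rw [nsmul_eq_mul]
        rw [h3]
        exact h2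
      have hCS : (T ξ)^2 ≤ (n:ℝ) *
          ∑ j ∈ Finset.range n, ‖chainPts bm n ξ (j+1) - chainPts bm n ξ j‖^2 := by
        have h1 := Finset.sum_mul_sq_le_sq_mul_sq (Finset.range n) (fun _ => (1:ℝ))
          (fun j => ‖chainPts bm n ξ (j+1) - chainPts bm n ξ j‖)
        simp only [one_pow, one_mul, Finset.sum_const, Finset.card_range, nsmul_eq_mul] at h1
        show (∑ j ∈ Finset.range n, ‖chainPts bm n ξ (j+1) - chainPts bm n ξ j‖)^2 ≤ _
        calc (∑ j ∈ Finset.range n, ‖chainPts bm n ξ (j+1) - chainPts bm n ξ j‖)^2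
            ≤ (n:ℝ) * 1 * ∑ j ∈ Finset.range n,
                ‖chainPts bm n ξ (j+1) - chainPts bm n ξ j‖^2 := by
              calc (∑ j ∈ Finset.range n, ‖chainPts bm n ξ (j+1) - chainPts bm n ξ j‖)^2
                  = (∑ j ∈ Finset.range n,
                      1 * ‖chainPts bm n ξ (j+1) - chainPts bm n ξ j‖)^2 := by
                    simp
                _ ≤ (n:ℝ) * 1 * ∑ j ∈ Finset.range n,
                      ‖chainPts bm n ξ (j+1) - chainPts bm n ξ j‖^2 := by
                    have h9 := Finset.sum_mul_sq_le_sq_mul_sq (Finset.range n) (fun _ => (1:ℝ))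
                      (fun j => ‖chainPts bm n ξ (j+1) - chainPts bm n ξ j‖)
                    calc (∑ j ∈ Finset.range n,
                          1 * ‖chainPts bm n ξ (j+1) - chainPts bm n ξ j‖)^2
                        ≤ (∑ _j ∈ Finset.range n, (1:ℝ)^2) * ∑ j ∈ Finset.range n,
                            ‖chainPts bm n ξ (j+1) - chainPts bm n ξ j‖^2 := h9
                      _ = (n:ℝ) * 1 * ∑ j ∈ Finset.range n,
                            ‖chainPts bm n ξ (j+1) - chainPts bm n ξ j‖^2 := by
                          simp
          _ = (n:ℝ) * ∑ j ∈ Finset.range n,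
                ‖chainPts bm n ξ (j+1) - chainPts bm n ξ j‖^2 := by ring
      have hCS2 : (α/(4*(n:ℝ))) * (T ξ)^2
          ≤ (α/4) * ∑ j ∈ Finset.range n, ‖chainPts bm n ξ (j+1) - chainPts bm n ξ j‖^2 := by
        have h1 : (α/(4*(n:ℝ))) * (T ξ)^2 = (α/4) * ((T ξ)^2 / n) := by
          field_simp
        rw [h1]
        apply mul_le_mul_of_nonneg_left _ (by positivity : (0:ℝ) ≤ α/4)
        rw [div_le_iff₀ hn']
        calc (T ξ)^2 ≤ (n:ℝ) * ∑ j ∈ Finset.range n,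
              ‖chainPts bm n ξ (j+1) - chainPts bm n ξ j‖^2 := hCS
          _ = (∑ j ∈ Finset.range n,
              ‖chainPts bm n ξ (j+1) - chainPts bm n ξ j‖^2) * n := mul_comm _ _
      have hGval : G ξ = v (chainPts bm n ξ 0)
          + ∑ j ∈ Finset.range n, S (chainPts bm n ξ j, chainPts bm n ξ (j+1)) := rfl
      rw [hGval]
      linarith
    set β : ℝ := α/(4*(n:ℝ)) with hβ
    have hβpos : 0 < β := by positivity
    set Tthr : ℝ := max 1 ((Γ + |v bm + (n : ℝ) * (-C - M^2/α)| + |G ξg| + 1)/β) with hTthr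
    have hfar : ∀ ξ : Fin n → Ed d, ‖bm‖ + Tthr ≤ ‖ξ‖ → G ξg ≤ G ξ := by
      intro ξ hξfar
      have hnormbd : ‖ξ‖ ≤ ‖bm‖ + T ξ := by
        apply (pi_norm_le_iff_of_nonneg (by positivity)).mpr
        intro i
        have h1 : ξ i = chainPts bm n ξ i.val := (chainPts_lt i.isLt).symm
        rw [h1]
        have h2 := hTbd ξ i.val (le_of_lt i.isLt)
        have h3 : ‖chainPts bm n ξ i.val‖ ≤ ‖bm‖ + ‖chainPts bm n ξ i.val - bm‖ := by
          have h4 := norm_add_le bm (chainPts bm n ξ i.val - bm)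
          rw [add_sub_cancel] at h4
          exact h4
        linarith
      have hTlow : Tthr ≤ T ξ := by linarith
      have hT1 : 1 ≤ T ξ := le_trans (le_max_left _ _) hTlow
      have hT2 : (Γ + |v bm + (n : ℝ) * (-C - M^2/α)| + |G ξg| + 1)/β ≤ T ξ :=
        le_trans (le_max_right _ _) hTlow
      have hβT : Γ + |v bm + (n : ℝ) * (-C - M^2/α)| + |G ξg| + 1 ≤ β * T ξ := by
        rw [div_le_iff₀ hβpos] at hT2
        linarith [mul_comm (T ξ) β]
      have h2 := hGlower ξ
      set K : ℝ := v bm + (n : ℝ) * (-C - M^2/α) with hK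
      have hbig : K - Γ * T ξ + β * (T ξ)^2 ≤ G ξ := by
        rw [hK, hβ]
        linarith [h2]
      have hTnn' := hTnn ξ
      have e1 : (Γ + |K| + |G ξg| + 1) * T ξ ≤ β * (T ξ)^2 := by
        calc (Γ + |K| + |G ξg| + 1) * T ξ ≤ (β * T ξ) * T ξ :=
              mul_le_mul_of_nonneg_right hβT hTnn'
          _ = β * (T ξ)^2 := by ring
      have e2 : (|K| + |G ξg| + 1) ≤ (|K| + |G ξg| + 1) * T ξ := by
        have h8 := mul_le_mul_of_nonneg_left hT1
          (show (0:ℝ) ≤ |K| + |G ξg| + 1 by positivity)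
        rwa [mul_one] at h8
      have e3 : Γ * T ξ + (|K| + |G ξg| + 1) ≤ β * (T ξ)^2 := by
        have h9 : Γ * T ξ + (|K| + |G ξg| + 1) * T ξ = (Γ + |K| + |G ξg| + 1) * T ξ := by
          ring
        linarith [e1, e2, h9]
      linarith [hbig, e3, neg_abs_le K, le_abs_self (G ξg)]
    have hev : ∀ᶠ ξ in cocompact (Fin n → Ed d), G ξg ≤ G ξ := by
      have htend : Filter.Tendsto (fun ξ : Fin n → Ed d => ‖ξ‖)
          (cocompact (Fin n → Ed d)) Filter.atTop := tendsto_norm_cocompact_atTop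
      exact (htend.eventually_ge_atTop (‖bm‖ + Tthr)).mono (fun ξ h => hfar ξ h)
    obtain ⟨ξ0, hξ0⟩ := hGcont.exists_forall_le' ξg hev
    exact ⟨ξ0, hξ0⟩
  obtain ⟨ξm, hξm⟩ := hEX
  have hξmgraph := hMIN ξm hξm
  have hGm : G ξm = v b + ∑ j ∈ Finset.range n, S (Xpt F γ j b, Xpt F γ (j+1) b) := by
    show v (chainPts bm n ξm 0)
        + (∑ j ∈ Finset.range n, S (chainPts bm n ξm j, chainPts bm n ξm (j+1))) = _
    congr 1
    · rw [hξmgraph 0 (by omega), hX0]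
    · apply Finset.sum_congr rfl
      intro j hj
      have hj' := Finset.mem_range.mp hj
      rw [hξmgraph j (by omega), hξmgraph (j+1) (by omega)]
  constructor
  · intro ξ
    have := hξm ξ
    rw [hGm] at this
    exact this
  · intro ξ hval
    apply hMIN ξ
    intro η
    have h1 : G ξ = G ξm := by
      rw [hGm]
      exact hval
    rw [h1]
    exact hξm η

end Master

end AuxProofs

/-- Proposition A.4 of the paper. Let `f` be a positive symplectic
twist map of `𝕋^d × ℝ^d` with lift `F`. Then for every `(m, n) ∈ ℤ^d × ℕ*` there is at
most one Lipschitz Lagrangian `(m,n)`-periodic graph of `F`. -/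
theorem statement14 (d : ℕ) (F : Ed d × Ed d → Ed d × Ed d) (S : Ed d × Ed d → ℝ)
    (hFS : IsSymplecticTwistLift F S) (hpos : PositiveGenFun S)
    (m : Fin d → ℤ) (n : ℕ) (hn : 0 < n) :
    ∀ γ₁ γ₂ : Ed d → Ed d,
      (∃ K : NNReal, LipschitzWith K γ₁) → ZdPeriodic γ₁ → IsLagrangianGraph γ₁ →
        IsPeriodicGraph F m n γ₁ →
      (∃ K : NNReal, LipschitzWith K γ₂) → ZdPeriodic γ₂ → IsLagrangianGraph γ₂ →
        IsPeriodicGraph F m n γ₂ →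
      γ₁ = γ₂ := by
  intro γ₁ γ₂ hLip₁ hZper₁ hLag₁ hgr₁ hLip₂ hZper₂ hLag₂ hgr₂
  obtain ⟨K₁, hK₁⟩ := hLip₁
  obtain ⟨K₂, hK₂⟩ := hLip₂
  have hγ₁c : Continuous γ₁ := hK₁.continuous
  have hγ₂c : Continuous γ₂ := hK₂.continuous
  obtain ⟨hS, α, hαpos, hα⟩ := hpos
  obtain ⟨_, Tinv, _, hTl, hTr⟩ := hFS.twist
  have hdq := hFS.genfun.dq
  have hdQ := hFS.genfun.dQ
  have hper := hFS.genfun.periodic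
  have hv₁ : ∀ q, HasFDerivAt (SmoothLoop.pot γ₁) (innerSL ℝ (γ₁ q)) q :=
    fun q => SmoothLoop.pot_hasFDerivAt γ₁ hγ₁c hLag₁ q
  have hv₂ : ∀ q, HasFDerivAt (SmoothLoop.pot γ₂) (innerSL ℝ (γ₂ q)) q :=
    fun q => SmoothLoop.pot_hasFDerivAt γ₂ hγ₂c hLag₂ q
  funext b
  -- the two graph tuples
  set ξ1 : Fin n → Ed d := fun k => Xpt F γ₁ k.val b with hξ1
  set ξ2 : Fin n → Ed d := fun k => Xpt F γ₂ k.val b with hξ2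
  have hXn₁ : Xpt F γ₁ n b = b + intVec d m := congrArg Prod.fst (hgr₁ b)
  have hXn₂ : Xpt F γ₂ n b = b + intVec d m := congrArg Prod.fst (hgr₂ b)
  have hgt₁ : ∀ j, j ≤ n → chainPts (b + intVec d m) n ξ1 j = Xpt F γ₁ j b := by
    intro j hj
    by_cases h : j < n
    · rw [chainPts_lt h]
    · have hj' : j = n := by omega
      rw [chainPts_ge h, hj', hXn₁]
  have hgt₂ : ∀ j, j ≤ n → chainPts (b + intVec d m) n ξ2 j = Xpt F γ₂ j b := by
    intro j hj
    by_cases h : j < n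
    · rw [chainPts_lt h]
    · have hj' : j = n := by omega
      rw [chainPts_ge h, hj', hXn₂]
  have hX0₁ : Xpt F γ₁ 0 b = b := rfl
  have hX0₂ : Xpt F γ₂ 0 b = b := rfl
  have hm₁ := master F S Tinv hTl hTr hS hdq hdQ hper hαpos hα m n hn γ₁ hγ₁c hZper₁
    (SmoothLoop.pot γ₁) hv₁ hgr₁ b
  have hm₂ := master F S Tinv hTl hTr hS hdq hdQ hper hαpos hα m n hn γ₂ hγ₂c hZper₂
    (SmoothLoop.pot γ₂) hv₂ hgr₂ b
  -- evaluate cross actions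
  have hsum₂ : ∑ j ∈ Finset.range n,
        S (chainPts (b + intVec d m) n ξ2 j, chainPts (b + intVec d m) n ξ2 (j+1))
      = ∑ j ∈ Finset.range n, S (Xpt F γ₂ j b, Xpt F γ₂ (j+1) b) := by
    apply Finset.sum_congr rfl
    intro j hj
    have hj' := Finset.mem_range.mp hj
    rw [hgt₂ j (by omega), hgt₂ (j+1) (by omega)]
  have hsum₁ : ∑ j ∈ Finset.range n,
        S (chainPts (b + intVec d m) n ξ1 j, chainPts (b + intVec d m) n ξ1 (j+1))
      = ∑ j ∈ Finset.range n, S (Xpt F γ₁ j b, Xpt F γ₁ (j+1) b) := by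
    apply Finset.sum_congr rfl
    intro j hj
    have hj' := Finset.mem_range.mp hj
    rw [hgt₁ j (by omega), hgt₁ (j+1) (by omega)]
  have hc0₂ : chainPts (b + intVec d m) n ξ2 0 = b := by
    rw [hgt₂ 0 (by omega), hX0₂]
  have hc0₁ : chainPts (b + intVec d m) n ξ1 0 = b := by
    rw [hgt₁ 0 (by omega), hX0₁]
  have hA12 : (∑ j ∈ Finset.range n, S (Xpt F γ₁ j b, Xpt F γ₁ (j+1) b))
      ≤ ∑ j ∈ Finset.range n, S (Xpt F γ₂ j b, Xpt F γ₂ (j+1) b) := by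
    have h1 := hm₁.1 ξ2
    rw [hsum₂, hc0₂] at h1
    linarith
  have hA21 : (∑ j ∈ Finset.range n, S (Xpt F γ₂ j b, Xpt F γ₂ (j+1) b))
      ≤ ∑ j ∈ Finset.range n, S (Xpt F γ₁ j b, Xpt F γ₁ (j+1) b) := by
    have h1 := hm₂.1 ξ1
    rw [hsum₁, hc0₁] at h1
    linarith
  have hAeq := le_antisymm hA12 hA21
  -- the γ₂-tuple is a minimizer for the γ₁-problem
  have hkey := hm₁.2 ξ2 (by rw [hsum₂, hc0₂, hAeq]) 1 hn
  have hX1eq : Xpt F γ₂ 1 b = Xpt F γ₁ 1 b := by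
    rw [← hgt₂ 1 hn]
    exact hkey
  -- conclude via the twist inverse
  have hπ2 : ∀ (a p : Ed d), (Tinv (a, (F (a, p)).1)).2 = p := by
    intro a p
    exact congrArg Prod.snd (hTl (a, p))
  have hX1f : ∀ γ : Ed d → Ed d, Xpt F γ 1 b = (F (b, γ b)).1 := by
    intro γ
    show (F^[1] (b, γ b)).1 = _
    rw [Function.iterate_one]
  have h1 : (Tinv (b, Xpt F γ₁ 1 b)).2 = γ₁ b := by
    rw [hX1f γ₁]
    exact hπ2 b (γ₁ b)
  have h2 : (Tinv (b, Xpt F γ₂ 1 b)).2 = γ₂ b := by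
    rw [hX1f γ₂]
    exact hπ2 b (γ₂ b)
  rw [← h1, ← h2, hX1eq]

end
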